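/- arXiv:1211.3049 — 2 statements merged into one kernel-verified Lean document; each statement's English description precedes it below -/
import Mathlib

section
/- A word u over the alphabet {0,1} is central (i.e., a palindromic prefix of some characteristic Sturmian word, equivalently both 0u1 and 1u0 are balanced) if and only if u is a palindrome and either u is a power of a single letter, or u = p01q = q10p for some palindromes p and q. -/
/-- A finite binary word is balanced if the numbers of occurrences of `true`
in any two factors of equal length differ by at most 1. -/
def BalancedWord (w : List Bool) : Prop :=
  ∀ u v : List Bool, u <:+: w → v <:+: w → u.length = v.length →
    u.count true ≤ v.count true + 1

/-- A word `u` is central if both `0u1` and `1u0` are balanced. -/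
def Central (u : List Bool) : Prop :=
  BalancedWord (false :: (u ++ [true])) ∧ BalancedWord (true :: (u ++ [false]))

namespace CC

/-- letter access with default `false` -/
def L (w : List Bool) (i : ℕ) : Bool := w.getD i false

/-- number of `true`s in the length-`m` prefix -/
def F (w : List Bool) (m : ℕ) : ℕ := (w.take m).count true

def W0 (u : List Bool) : List Bool := false :: (u ++ [true])
def W1 (u : List Bool) : List Bool := true :: (u ++ [false])

lemma L_eq_getElem {w : List Bool} {i : ℕ} (h : i < w.length) : L w i = w[i] := by
  simp [L, List.getD_eq_getElem?_getD, List.getElem?_eq_getElem h]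

lemma L_default {w : List Bool} {i : ℕ} (h : w.length ≤ i) : L w i = false := by
  simp [L, List.getD_eq_getElem?_getD, List.getElem?_eq_none h]

lemma L_cons_zero {x : Bool} {w : List Bool} : L (x :: w) 0 = x := rfl

lemma L_cons_succ {x : Bool} {w : List Bool} {i : ℕ} : L (x :: w) (i+1) = L w i := rfl

lemma L_append_left {v t : List Bool} {i : ℕ} (h : i < v.length) :
    L (v ++ t) i = L v i := by
  rw [L_eq_getElem (by simp; omega), L_eq_getElem h, List.getElem_append_left]

lemma L_append_right {v t : List Bool} {i : ℕ} (h : v.length ≤ i) :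
    L (v ++ t) i = L t (i - v.length) := by
  by_cases h2 : i < v.length + t.length
  · rw [L_eq_getElem (by simp; omega), L_eq_getElem (by omega), List.getElem_append_right h]
  · rw [L_default (by simp; omega), L_default (by omega)]

lemma L_take {w : List Bool} {m i : ℕ} (h : i < m) : L (w.take m) i = L w i := by
  by_cases h2 : i < w.length
  · rw [L_eq_getElem (by simp; omega), L_eq_getElem h2, List.getElem_take]
  · rw [L_default (by simp; omega), L_default (by omega)]

lemma L_drop {w : List Bool} {m i : ℕ} : L (w.drop m) i = L w (m + i) := by
  by_cases h2 : m + i < w.length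
  · rw [L_eq_getElem (by simp; omega), L_eq_getElem h2, List.getElem_drop]
  · rw [L_default (by simp; omega), L_default (by omega)]

lemma L_reverse {w : List Bool} {i : ℕ} (h : i < w.length) :
    L w.reverse i = L w (w.length - 1 - i) := by
  rw [L_eq_getElem (by simpa using h), L_eq_getElem (by omega), List.getElem_reverse]

lemma L_replicate {k : ℕ} {x : Bool} {i : ℕ} (h : i < k) : L (List.replicate k x) i = x := by
  rw [L_eq_getElem (by simpa using h), List.getElem_replicate]

lemma L_ext {v w : List Bool} (hl : v.length = w.length)
    (h : ∀ i < v.length, L v i = L w i) : v = w := by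
  apply List.ext_getElem hl
  intro i h1 h2
  have := h i h1
  rwa [L_eq_getElem h1, L_eq_getElem h2] at this

lemma F_zero {w : List Bool} : F w 0 = 0 := rfl

lemma F_succ {w : List Bool} {m : ℕ} (h : m < w.length) :
    F w (m+1) = F w m + (L w m).toNat := by
  rw [F, F, List.take_succ, List.count_append, List.getElem?_eq_getElem h]
  rw [L_eq_getElem h]
  cases w[m] <;> simp

lemma F_add {w : List Bool} {i l : ℕ} :
    F w (i + l) = F w i + ((w.drop i).take l).count true := by
  rw [F, F, List.take_add, List.count_append]

lemma F_top {w : List Bool} {m : ℕ} (h : w.length ≤ m) : F w m = w.count true := by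
  rw [F, List.take_of_length_le h]

lemma F_le {w : List Bool} {m : ℕ} : F w m ≤ m := by
  calc (w.take m).count true ≤ (w.take m).length := List.count_le_length
  _ ≤ m := by simp

lemma F_mono {w : List Bool} {m m' : ℕ} (h : m ≤ m') : F w m ≤ F w m' := by
  obtain ⟨k, rfl⟩ := Nat.exists_eq_add_of_le h
  rw [F_add]; omega

lemma F_step_le {w : List Bool} {m : ℕ} : F w (m+1) ≤ F w m + 1 := by
  rw [show m + 1 = m + 1 from rfl, F_add]
  have : ((w.drop m).take 1).count true ≤ 1 := by
    calc _ ≤ ((w.drop m).take 1).length := List.count_le_length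
    _ ≤ 1 := by simp
  omega

/-- every infix arises as a drop-take -/
lemma infix_exists {s w : List Bool} (h : s <:+: w) :
    ∃ i, i + s.length ≤ w.length ∧ s = (w.drop i).take s.length := by
  obtain ⟨t, r, rfl⟩ := h
  refine ⟨t.length, by simp, ?_⟩
  rw [List.append_assoc, List.drop_append_of_le_length (by simp), List.drop_length,
    List.nil_append, List.take_append_of_le_length (by simp), List.take_length]

lemma droptake_infix {w : List Bool} (i l : ℕ) : (w.drop i).take l <:+: w := by
  refine ⟨w.take i, (w.drop i).drop l, ?_⟩
  rw [List.append_assoc, List.take_append_drop, List.take_append_drop]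

lemma count_droptake {w : List Bool} {i l : ℕ} :
    F w i + ((w.drop i).take l).count true = F w (i + l) := by
  rw [F_add]

lemma length_droptake {w : List Bool} {i l : ℕ} (h : i + l ≤ w.length) :
    ((w.drop i).take l).length = l := by simp; omega

/-- main consequence of balancedness, in addition-only form -/
lemma bal {w : List Bool} (hw : BalancedWord w) {i j l : ℕ}
    (h1 : i + l ≤ w.length) (h2 : j + l ≤ w.length) :
    F w (i + l) + F w j ≤ F w i + F w (j + l) + 1 := by
  have hb := hw ((w.drop i).take l) ((w.drop j).take l) (droptake_infix i l)
    (droptake_infix j l) (by rw [length_droptake h1, length_droptake h2])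
  have c1 := @count_droptake w i l
  have c2 := @count_droptake w j l
  omega


lemma core (n K : ℕ) (f : ℕ → ℕ) (hn : 2 ≤ n) (hK1 : 1 ≤ K) (hKn : K + 1 ≤ n)
    (h0 : f 0 = 0)
    (I1 : ∀ i l, i + l ≤ n → f (i + l) ≤ f i + f l + 1)
    (I2 : ∀ i l, 1 ≤ i → i + l + 1 ≤ n → f i + f l ≤ f (i + l))
    (I3 : ∀ l, 1 ≤ l → l + 1 ≤ n → f l + f (n - l) + 1 = K) :
    (∀ m, 1 ≤ m → m + 1 ≤ n → n * f m + 1 ≤ m * K ∧ m * K + 1 ≤ n * f m + n)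
      ∧ Nat.Coprime K n := by
  set r : ℕ → ℤ := fun m => m * K - n * f m with hr
  have hrefl : ∀ m, 1 ≤ m → m + 1 ≤ n → r m + r (n - m) = n := by
    intro m h1 h2
    have h3 := I3 m h1 h2
    simp only [hr]
    have : ((n - m : ℕ) : ℤ) = (n : ℤ) - m := by
      have : m ≤ n := by omega
      push_cast [this]; ring
    rw [this]
    have hc : (f m : ℤ) + f (n - m) + 1 = K := by exact_mod_cast h3
    ring_nf
    nlinarith [hc]
  have hsub : ∀ i l, 1 ≤ i → i + l + 1 ≤ n → r (i + l) ≤ r i + r l := by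
    intro i l h1 h2
    have h3 := I2 i l h1 h2
    simp only [hr]
    have : (f i : ℤ) + f l ≤ f (i + l) := by exact_mod_cast h3
    push_cast
    nlinarith [this]
  have hsup : ∀ i l, i + l ≤ n → r i + r l - n ≤ r (i + l) := by
    intro i l h2
    have h3 := I1 i l h2
    have : (f (i + l) : ℤ) ≤ f i + f l + 1 := by exact_mod_cast h3
    simp only [hr]
    push_cast
    nlinarith [this]
  have key : ∀ d, 1 ≤ d → d + 1 ≤ n → 1 ≤ r d ∧ r d ≤ n - 1 := by
    intro d
    induction d using Nat.strong_induction_on with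
    | _ d IH =>
    intro hd1 hd2
    rcases le_or_gt (r d) 0 with hT | hS1
    · -- case r d ≤ 0 : build chain r (n - j*d) ≥ n
      exfalso
      have chain : ∀ j, 1 ≤ j → ∀ m, 1 ≤ m → m + j * d = n → (n : ℤ) ≤ r m := by
        intro j
        induction j with
        | zero => omega
        | succ j IHj =>
          intro _ m hm1 hmeq
          have hexp : (j + 1) * d = j * d + d := by ring
          rcases Nat.eq_zero_or_pos j with hj | hj
          · subst hj
            have hmd : m = n - d := by omega
            have := hrefl d hd1 hd2
            rw [hmd]; linarith
          · have hjd1 : d ≤ j * d := Nat.le_mul_of_pos_left d hj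
            have hprev : (n : ℤ) ≤ r (m + d) := IHj (by omega) (m + d) (by omega) (by omega)
            have hs := hsub m d (by omega) (by omega)
            linarith
      obtain ⟨j0, m0, hj01, hm01, hm0d, hmeq⟩ :
          ∃ j0 m0, 1 ≤ j0 ∧ 1 ≤ m0 ∧ m0 ≤ d ∧ m0 + j0 * d = n := by
        have hdm := Nat.div_add_mod (n - 1) d
        have hmlt : (n - 1) % d < d := Nat.mod_lt _ (by omega)
        have h1le : 1 ≤ (n - 1) / d := by
          rw [Nat.le_div_iff_mul_le (by omega)]; omega
        have hX : ((n - 1) / d) * d = d * ((n - 1) / d) := Nat.mul_comm _ _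
        exact ⟨(n - 1) / d, n - ((n - 1) / d) * d, h1le, by omega, by omega, by omega⟩
      have hchain := chain j0 hj01 m0 hm01 hmeq
      rcases Nat.eq_or_lt_of_le hm0d with he | hlt
      · rw [he] at hchain; linarith
      · have := IH m0 hlt hm01 (by omega)
        linarith [this.2]
    · -- case r d ≥ 1; show r d ≤ n - 1, else chain
      constructor
      · exact hS1
      by_contra hS
      push_neg at hS
      have hSn : (n : ℤ) ≤ r d := by linarith
      have chain2 : ∀ j, 1 ≤ j → ∀ m, 1 ≤ m → m + j * d = n → r m ≤ 0 := by
        intro j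
        induction j with
        | zero => omega
        | succ j IHj =>
          intro _ m hm1 hmeq
          have hexp : (j + 1) * d = j * d + d := by ring
          rcases Nat.eq_zero_or_pos j with hj | hj
          · subst hj
            have hmd : m = n - d := by omega
            have := hrefl d hd1 hd2
            rw [hmd]; linarith
          · have hjd1 : d ≤ j * d := Nat.le_mul_of_pos_left d hj
            have hprev : r (m + d) ≤ 0 := IHj (by omega) (m + d) (by omega) (by omega)
            -- r (n - (m+d)) = r (j*d) ≥ n via refl at (m+d)
            have hrf := hrefl (m + d) (by omega) (by omega)
            have heq2 : n - (m + d) = j * d := by omega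
            rw [heq2] at hrf
            have hjdn : (n : ℤ) ≤ r (j * d) := by linarith
            have hsp := hsup (j * d) d (by omega)
            have hjd2 : (n : ℤ) ≤ r (j * d + d) := by linarith
            have hrf2 := hrefl (j * d + d) (by omega) (by omega)
            have heq3 : n - (j * d + d) = m := by omega
            rw [heq3] at hrf2
            linarith
      obtain ⟨j0, m0, hj01, hm01, hm0d, hmeq⟩ :
          ∃ j0 m0, 1 ≤ j0 ∧ 1 ≤ m0 ∧ m0 ≤ d ∧ m0 + j0 * d = n := by
        have hdm := Nat.div_add_mod (n - 1) d
        have hmlt : (n - 1) % d < d := Nat.mod_lt _ (by omega)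
        have h1le : 1 ≤ (n - 1) / d := by
          rw [Nat.le_div_iff_mul_le (by omega)]; omega
        have hX : ((n - 1) / d) * d = d * ((n - 1) / d) := Nat.mul_comm _ _
        exact ⟨(n - 1) / d, n - ((n - 1) / d) * d, h1le, by omega, by omega, by omega⟩
      have hchain := chain2 j0 hj01 m0 hm01 hmeq
      rcases Nat.eq_or_lt_of_le hm0d with he | hlt
      · rw [he] at hchain; linarith
      · have := IH m0 hlt hm01 (by omega)
        linarith [this.1]
  constructor
  · intro m h1 h2
    obtain ⟨ha, hb⟩ := key m h1 h2
    constructor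
    · have : (n : ℤ) * f m + 1 ≤ m * K := by simp only [hr] at ha ⊢; linarith
      exact_mod_cast this
    · have : (m : ℤ) * K + 1 ≤ n * f m + n := by simp only [hr] at hb ⊢; linarith
      exact_mod_cast this
  · -- coprime
    by_contra hco
    have hg := Nat.gcd_dvd_left K n
    have hg2 := Nat.gcd_dvd_right K n
    set d := Nat.gcd K n with hd
    have hd0 : d ≠ 0 := by
      intro h
      rw [h] at hg2
      omega
    have hd1 : d ≠ 1 := hco
    have hd2 : 2 ≤ d := by omega
    obtain ⟨K', hK'⟩ := hg
    obtain ⟨n', hn'⟩ := hg2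
    have hn'0 : 1 ≤ n' := by
      rcases Nat.eq_zero_or_pos n' with h | h
      · rw [h, Nat.mul_zero] at hn'; omega
      · exact h
    have hmlt : n' + 1 ≤ n := by
      nlinarith
    have hm1 : 1 ≤ n' := hn'0
    obtain ⟨ha, hb⟩ := key n' hm1 hmlt
    have hmK : n' * K = n * K' := by
      rw [hK', hn']; ring
    have hdvd : (n : ℤ) ∣ r n' := by
      simp only [hr]
      have : (n' : ℤ) * K = n * K' := by exact_mod_cast hmK
      rw [this]
      exact ⟨K' - f n', by ring⟩
    have h1 : (1 : ℤ) ≤ r n' := ha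
    have h2 : r n' ≤ (n : ℤ) - 1 := hb
    have := Int.le_of_dvd (by linarith) hdvd
    linarith

def Mspec (u : List Bool) : Prop :=
  Nat.Coprime (u.count true + 1) (u.length + 2) ∧
  ∀ m ≤ u.length + 2, F (W0 u) m = m * (u.count true + 1) / (u.length + 2)

lemma W0_length (u : List Bool) : (W0 u).length = u.length + 2 := by simp [W0]

lemma W1_length (u : List Bool) : (W1 u).length = u.length + 2 := by simp [W1]

lemma W0_count (u : List Bool) : (W0 u).count true = u.count true + 1 := by
  simp [W0]

lemma W1_count (u : List Bool) : (W1 u).count true = u.count true + 1 := by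
  simp [W1]

lemma F_W0 {u : List Bool} {l : ℕ} (h : l ≤ u.length) : F (W0 u) (l + 1) = F u l := by
  rw [W0, F, List.take_succ_cons, List.take_append_of_le_length h]
  simp [F]

lemma F_W1 {u : List Bool} {l : ℕ} (h : l ≤ u.length) : F (W1 u) (l + 1) = F u l + 1 := by
  rw [W1, F, List.take_succ_cons, List.take_append_of_le_length h]
  simp [F, Nat.add_comm]

lemma window_eq {u : List Bool} {i l : ℕ} (h1 : 1 ≤ i) (h2 : i + l ≤ u.length + 1) :
    ((W1 u).drop i).take l = ((W0 u).drop i).take l := by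
  obtain ⟨i', rfl⟩ := Nat.exists_eq_add_of_le h1
  rw [W0, W1, Nat.add_comm 1 i', List.drop_succ_cons, List.drop_succ_cons,
    List.drop_append_of_le_length (by omega), List.drop_append_of_le_length (by omega),
    List.take_append_of_le_length (by simp; omega),
    List.take_append_of_le_length (by simp; omega)]

lemma part1 {u : List Bool} (hc : Central u) : Mspec u := by
  obtain ⟨hb0, hb1⟩ := hc
  have hb0' : BalancedWord (W0 u) := hb0
  have hb1' : BalancedWord (W1 u) := hb1
  set n := u.length + 2 with hn
  set K := u.count true + 1 with hK
  have hlen0 : (W0 u).length = n := W0_length u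
  have hlen1 : (W1 u).length = n := W1_length u
  have hcnt0 : (W0 u).count true = K := W0_count u
  have hcnt1 : (W1 u).count true = K := W1_count u
  have hfn : F (W0 u) n = K := by rw [F_top (by omega)]; exact hcnt0
  have hfW1 : ∀ l, 1 ≤ l → l ≤ n - 1 → F (W1 u) l = F (W0 u) l + 1 := by
    intro l h1 h2
    obtain ⟨l', rfl⟩ := Nat.exists_eq_add_of_le h1
    rw [Nat.add_comm 1 l']
    rw [F_W1 (by omega), F_W0 (by omega)]
  -- I1
  have I1 : ∀ i l, i + l ≤ n → F (W0 u) (i + l) ≤ F (W0 u) i + F (W0 u) l + 1 := by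
    intro i l h
    have hb := bal hb0' (i := i) (j := 0) (l := l) (by omega) (by omega)
    simp only [Nat.zero_add] at hb
    have h00 : F (W0 u) 0 = 0 := rfl
    omega
  -- I2
  have I2 : ∀ i l, 1 ≤ i → i + l + 1 ≤ n → F (W0 u) i + F (W0 u) l ≤ F (W0 u) (i + l) := by
    intro i l h1 h2
    rcases Nat.eq_zero_or_pos l with hl | hl
    · subst hl; simp [F]
    have hwe := window_eq (u := u) (i := i) (l := l) h1 (by omega)
    -- count of that window
    have c0 : F (W0 u) i + (((W0 u).drop i).take l).count true = F (W0 u) (i + l) := count_droptake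
    have c1 : F (W1 u) i + (((W1 u).drop i).take l).count true = F (W1 u) (i + l) :=
      count_droptake
    have hb := bal hb1' (i := 0) (j := i) (l := l) (by omega) (by omega)
    simp only [Nat.zero_add] at hb
    have hW1l : F (W1 u) l = F (W0 u) l + 1 := hfW1 l (by omega) (by omega)
    have hW10 : F (W1 u) 0 = 0 := rfl
    rw [hwe] at c1
    omega
  -- I3
  have I3 : ∀ l, 1 ≤ l → l + 1 ≤ n → F (W0 u) l + F (W0 u) (n - l) + 1 = K := by
    intro l h1 h2
    -- suffix windows
    have c0 : F (W0 u) (n - l) + (((W0 u).drop (n - l)).take l).count true = F (W0 u) n := by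
      have := count_droptake (w := W0 u) (i := n - l) (l := l)
      rw [show n - l + l = n by omega] at this
      exact this
    have c1 : F (W1 u) (n - l) + (((W1 u).drop (n - l)).take l).count true
        = F (W1 u) n := by
      have := count_droptake (w := W1 u) (i := n - l) (l := l)
      rw [show n - l + l = n by omega] at this
      exact this
    have hW1n : F (W1 u) n = K := by rw [F_top (by omega)]; exact hcnt1
    have hW1nl : F (W1 u) (n - l) = F (W0 u) (n - l) + 1 := hfW1 (n - l) (by omega) (by omega)
    -- balanced W0 : suffix vs prefix, both directions
    have hbA := bal hb0' (i := n - l) (j := 0) (l := l) (by omega) (by omega)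
    have hbB := bal hb0' (i := 0) (j := n - l) (l := l) (by omega) (by omega)
    rw [show n - l + l = n by omega] at hbA hbB
    simp only [Nat.zero_add] at hbA hbB
    -- balanced W1 : prefix vs suffix
    have hbC := bal hb1' (i := 0) (j := n - l) (l := l) (by omega) (by omega)
    rw [show n - l + l = n by omega] at hbC
    simp only [Nat.zero_add] at hbC
    have hW1l : F (W1 u) l = F (W0 u) l + 1 := hfW1 l (by omega) (by omega)
    have h00 : F (W0 u) 0 = 0 := rfl
    have hW10 : F (W1 u) 0 = 0 := rfl
    omega
  have hcore := core n K (fun m => F (W0 u) m) (by omega) (by omega)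
    (by have := List.count_le_length (a := true) (l := u); omega) rfl I1 I2 I3
  constructor
  · exact hcore.2
  · intro m hm
    rcases Nat.eq_zero_or_pos m with h | h
    · subst h; simp [F]
    rcases Nat.eq_or_lt_of_le hm with he | hlt
    · have hnK : (u.length + 2) * (u.count true + 1) / (u.length + 2) = u.count true + 1 :=
        Nat.mul_div_cancel_left _ (by omega)
      rw [he, hnK, F_top (by omega)]
      exact hcnt0
    · obtain ⟨hA, hB⟩ := hcore.1 m h (by omega)
      symm
      apply Nat.div_eq_of_lt_le
      · calc F (W0 u) m * n = n * F (W0 u) m := Nat.mul_comm _ _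
          _ ≤ m * K := by omega
      · calc m * K < n * F (W0 u) m + n := by omega
          _ = (F (W0 u) m + 1) * n := by ring
/-! ### Arithmetic helpers -/

lemma mod_nonzero {K n m : ℕ} (h : Nat.Coprime K n) (h1 : 0 < m) (h2 : m < n) :
    m * K % n ≠ 0 := by
  intro hdvd
  have : n ∣ m * K := Nat.dvd_of_mod_eq_zero hdvd
  have : n ∣ m := (Nat.Coprime.dvd_of_dvd_mul_right (Nat.coprime_comm.mp h)) this
  have := Nat.le_of_dvd h1 this
  omega

lemma div_diff {K n : ℕ} (hn : 0 < n) (i l : ℕ) :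
    i * K / n + l * K / n ≤ (i + l) * K / n ∧
      (i + l) * K / n ≤ i * K / n + l * K / n + 1 := by
  have hexp : (i + l) * K = i * K + l * K := by ring
  rw [hexp, Nat.add_div hn]
  have h1 : i * K % n < n := Nat.mod_lt _ hn
  have h2 : l * K % n < n := Nat.mod_lt _ hn
  split <;> omega

lemma reflect {K n i : ℕ} (hn : 0 < n) (hco : Nat.Coprime K n)
    (h1 : 0 < i) (h2 : i < n) :
    i * K / n + (n - i) * K / n + 1 = K := by
  have hsum : i * K + (n - i) * K = n * K := by
    have : i + (n - i) = n := by omega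
    calc i * K + (n - i) * K = (i + (n - i)) * K := by ring
      _ = n * K := by rw [this]
  have hKdiv : (i * K + (n - i) * K) / n = K := by rw [hsum, Nat.mul_div_cancel_left _ hn]
  rw [Nat.add_div hn] at hKdiv
  have hm1 : i * K % n ≠ 0 := mod_nonzero hco h1 h2
  have hm2 : (n - i) * K % n ≠ 0 := mod_nonzero hco (by omega) (by omega)
  have hmod : (i * K % n + (n - i) * K % n) % n = 0 := by
    rw [← Nat.add_mod, hsum, Nat.mul_mod_right]
  have hb1 : i * K % n < n := Nat.mod_lt _ hn
  have hb2 : (n - i) * K % n < n := Nat.mod_lt _ hn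
  have hsn : i * K % n + (n - i) * K % n = n := by
    set x := i * K % n + (n - i) * K % n with hx
    obtain ⟨t, ht⟩ := Nat.dvd_of_mod_eq_zero hmod
    have ht3 : t = 0 ∨ t = 1 ∨ 2 ≤ t := by omega
    rcases ht3 with h | h | h
    · subst h; omega
    · subst h; omega
    · exfalso
      have h2 : n * 2 ≤ n * t := Nat.mul_le_mul_left _ h
      omega
  rw [if_pos (by omega)] at hKdiv
  omega

/-! ### Part 4 : Mspec → Central -/

lemma F_W1_eq {u : List Bool} {l : ℕ} (h1 : 1 ≤ l) (h2 : l ≤ u.length + 1) :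
    F (W1 u) l = F (W0 u) l + 1 := by
  obtain ⟨l', rfl⟩ := Nat.exists_eq_add_of_le h1
  rw [Nat.add_comm 1 l', F_W1 (by omega), F_W0 (by omega)]

lemma part4 {u : List Bool} (hm : Mspec u) : Central u := by
  obtain ⟨hco, hfl⟩ := hm
  set n := u.length + 2 with hn
  set K := u.count true + 1 with hK
  have hn0 : 0 < n := by omega
  have hwin0 : ∀ j l, j + l ≤ n →
      F (W0 u) j + l * K / n ≤ F (W0 u) (j + l) ∧
        F (W0 u) (j + l) ≤ F (W0 u) j + l * K / n + 1 := by
    intro j l h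
    have e1 : F (W0 u) j = j * K / n := hfl j (by omega)
    have e2 : F (W0 u) (j + l) = (j + l) * K / n := hfl (j + l) (by omega)
    have := div_diff (K := K) hn0 j l
    omega
  have hW1n : F (W1 u) n = K := by
    have h1 := W1_count u
    have h2 := W1_length u
    rw [F_top (by omega)]
    omega
  have hwin1 : ∀ j l, j + l ≤ n →
      F (W1 u) j + l * K / n ≤ F (W1 u) (j + l) ∧
        F (W1 u) (j + l) ≤ F (W1 u) j + l * K / n + 1 := by
    intro j l h
    rcases Nat.eq_zero_or_pos l with hl | hl
    · subst hl; simp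
    rcases Nat.eq_zero_or_pos j with hj | hj
    · subst hj
      simp only [Nat.zero_add]
      have hF0 : F (W1 u) 0 = 0 := rfl
      rcases Nat.eq_or_lt_of_le h with he | hlt
      · have he' : l = n := by omega
        rw [he', hW1n]
        have hd : n * K / n = K := Nat.mul_div_cancel_left _ hn0
        omega
      · have := F_W1_eq (u := u) (l := l) (by omega) (by omega)
        have e1 : F (W0 u) l = l * K / n := hfl l (by omega)
        omega
    rcases Nat.eq_or_lt_of_le h with he | hlt
    · -- j ≥ 1, j + l = n
      have hjn : j ≤ n - 1 := by omega
      have e1 : F (W1 u) j = j * K / n + 1 := by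
        rw [F_W1_eq (by omega) (by omega)]
        rw [hfl j (by omega)]
      have hrefl := reflect hn0 hco (i := j) (by omega) (by omega)
      have : n - j = l := by omega
      rw [this] at hrefl
      rw [he, hW1n]
      omega
    · have e1 : F (W1 u) j = j * K / n + 1 := by
        rw [F_W1_eq (by omega) (by omega), hfl j (by omega)]
      have e2 : F (W1 u) (j + l) = (j + l) * K / n + 1 := by
        rw [F_W1_eq (by omega) (by omega), hfl (j + l) (by omega)]
      have := div_diff (K := K) hn0 j l
      omega
  constructor
  · -- BalancedWord (W0 u)
    intro s t hs ht hlen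
    obtain ⟨i, hi, hs_eq⟩ := infix_exists (w := W0 u) hs
    obtain ⟨j, hj, ht_eq⟩ := infix_exists (w := W0 u) ht
    rw [W0_length] at hi hj
    have cs : F (W0 u) i + s.count true = F (W0 u) (i + s.length) := by
      rw [← count_droptake, ← hs_eq]
    have ct : F (W0 u) j + t.count true = F (W0 u) (j + t.length) := by
      rw [← count_droptake, ← ht_eq]
    have h1 := hwin0 i s.length (by omega)
    have h2 := hwin0 j t.length (by omega)
    rw [hlen] at h1 cs
    omega
  · -- BalancedWord (W1 u)
    intro s t hs ht hlen
    obtain ⟨i, hi, hs_eq⟩ := infix_exists (w := W1 u) hs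
    obtain ⟨j, hj, ht_eq⟩ := infix_exists (w := W1 u) ht
    rw [W1_length] at hi hj
    have cs : F (W1 u) i + s.count true = F (W1 u) (i + s.length) := by
      rw [← count_droptake, ← hs_eq]
    have ct : F (W1 u) j + t.count true = F (W1 u) (j + t.length) := by
      rw [← count_droptake, ← ht_eq]
    have h1 := hwin1 i s.length (by omega)
    have h2 := hwin1 j t.length (by omega)
    rw [hlen] at h1 cs
    omega

/-! ### modular helpers for Part 2 -/

lemma mod_split {x n : ℕ} (hn : 0 < n) (h : x < 2 * n) :
    x % n = if n ≤ x then x - n else x := by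
  split
  · next hle =>
    rw [Nat.mod_eq_sub_mod hle, Nat.mod_eq_of_lt (by omega)]
  · next hlt =>
    rw [Nat.mod_eq_of_lt (by omega)]

lemma rho_add (K n m1 m2 : ℕ) :
    (m1 + m2) * K % n = (m1 * K % n + m2 * K % n) % n := by
  rw [Nat.add_mul, Nat.add_mod]

lemma rho_inj {K n : ℕ} (hco : Nat.Coprime K n) {m1 m2 : ℕ}
    (h1 : m1 < n) (h2 : m2 < n) (h : m1 * K % n = m2 * K % n) : m1 = m2 := by
  have hmeq : m1 * K ≡ m2 * K [MOD n] := h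
  have := Nat.ModEq.cancel_right_of_coprime (by rw [Nat.coprime_comm] at hco; exact hco) hmeq
  have h3 : m1 % n = m2 % n := this
  rw [Nat.mod_eq_of_lt h1, Nat.mod_eq_of_lt h2] at h3
  exact h3

/-- if `m1 + m2 = s` then `ρ m1 + ρ m2 ∈ {ρ s, ρ s + n}` -/
lemma rho_pair {K n : ℕ} (hn : 0 < n) {m1 m2 s : ℕ} (h : m1 + m2 = s) :
    m1 * K % n + m2 * K % n = s * K % n ∨
      m1 * K % n + m2 * K % n = s * K % n + n := by
  have h1 : m1 * K % n < n := Nat.mod_lt _ hn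
  have h2 : m2 * K % n < n := Nat.mod_lt _ hn
  have h3 := rho_add K n m1 m2
  rw [h] at h3
  have h4 : (m1 * K % n + m2 * K % n) % n =
      if n ≤ m1 * K % n + m2 * K % n then m1 * K % n + m2 * K % n - n
      else m1 * K % n + m2 * K % n := mod_split hn (by omega)
  rw [h4] at h3
  split at h3 <;> omega

/-! ### Part 2 : Mspec → structure -/

def RHSpred (u : List Bool) : Prop :=
  u.reverse = u ∧
    ((∃ (a : Bool) (k : ℕ), u = List.replicate k a) ∨
      ∃ p q : List Bool, p.reverse = p ∧ q.reverse = q ∧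
        u = p ++ [false, true] ++ q ∧ u = q ++ [true, false] ++ p)

lemma decomp {w : List Bool} {i : ℕ} (h : i + 2 ≤ w.length) :
    w = w.take i ++ [L w i, L w (i+1)] ++ w.drop (i+2) := by
  have h1 : w.drop i = L w i :: w.drop (i+1) := by
    rw [List.drop_eq_getElem_cons (by omega), L_eq_getElem (by omega)]
  have h2 : w.drop (i+1) = L w (i+1) :: w.drop (i+2) := by
    rw [List.drop_eq_getElem_cons (by omega), L_eq_getElem (by omega)]
  calc w = w.take i ++ w.drop i := (List.take_append_drop _ _).symm
    _ = _ := by rw [h1, h2]; simp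

lemma L_W0 {u : List Bool} {j : ℕ} (h : j < u.length) : L (W0 u) (j + 1) = L u j := by
  rw [W0, L_cons_succ, L_append_left h]

lemma part2 {u : List Bool} (hm : Mspec u) : RHSpred u := by
  obtain ⟨hco, hfl⟩ := hm
  set n := u.length + 2 with hn
  set K := u.count true + 1 with hK
  have hn0 : 0 < n := by omega
  have hKn : K ≤ n - 1 := by have := List.count_le_length (a := true) (l := u); omega
  have hK1 : 1 ≤ K := by omega
  have hnz : ∀ m, 0 < m → m < n → m * K % n ≠ 0 := by
    intro m a b
    exact mod_nonzero hco a b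
  have hlt : ∀ m, m * K % n < n := fun m => Nat.mod_lt _ hn0
  -- letter formula
  have hletter : ∀ j, j < u.length → (L u j = true ↔ n ≤ (j+1) * K % n + K) := by
    intro j hj
    have hs := F_succ (w := W0 u) (m := j + 1) (by rw [W0_length]; omega)
    have e1 : F (W0 u) (j+1) = (j+1) * K / n := hfl (j+1) (by omega)
    have e2 : F (W0 u) (j+1+1) = (j+2) * K / n := by
      rw [show j+1+1 = j+2 from rfl]; exact hfl (j+2) (by omega)
    rw [L_W0 hj] at hs
    have hdiv : (j+2) * K / n = (j+1) * K / n + (if n ≤ (j+1)*K % n + K then 1 else 0) := by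
      have hexp : (j+2) * K = (j+1) * K + K := by ring
      rw [hexp, Nat.add_div hn0]
      have : K % n = K := Nat.mod_eq_of_lt (by omega)
      rw [this]
      have : K / n = 0 := Nat.div_eq_of_lt (by omega)
      rw [this]
      omega
    constructor
    · intro htrue
      rw [htrue] at hs
      simp at hs
      by_contra hcon
      rw [if_neg hcon] at hdiv
      omega
    · intro hcond
      rw [if_pos hcond] at hdiv
      by_contra hcon
      have : L u j = false := by
        cases hLuj : L u j
        · rfl
        · exact absurd hLuj hcon
      rw [this] at hs
      simp at hs
      omega
  -- alternative letter formula via wrap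
  have hletter2 : ∀ j, j < u.length → (L u j = true ↔ (j+2) * K % n < K) := by
    intro j hj
    rw [hletter j hj]
    have hpa := rho_pair (K := K) hn0 (m1 := j+1) (m2 := 1) (s := j+2) (by omega)
    have e1 : (1 : ℕ) * K % n = K := by
      rw [Nat.one_mul, Nat.mod_eq_of_lt (by omega)]
    rw [e1] at hpa
    have hne : (j+2) * K % n ≠ K := by
      intro hc
      have := rho_inj hco (m1 := j+2) (m2 := 1) (by omega) (by omega)
        (by
          have e1 : (1 : ℕ) * K % n = K := by
            rw [Nat.one_mul]
            exact Nat.mod_eq_of_lt (by omega)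
          exact hc.trans e1.symm)
      omega
    have h1 := hlt (j+1)
    have h2 := hlt (j+2)
    have h3 := hnz (j+1) (by omega) (by omega)
    omega
  -- mirror: u is a palindrome
  have hmirror : ∀ j, j < u.length → L u (u.length - 1 - j) = L u j := by
    intro j hj
    have hj' : u.length - 1 - j < u.length := by omega
    rw [Bool.eq_iff_iff, hletter _ hj', hletter2 _ hj]
    have hidx : u.length - 1 - j + 1 = n - (j + 2) := by omega
    rw [hidx]
    have hpa := rho_pair (K := K) hn0 (m1 := n - (j+2)) (m2 := j+2) (s := n) (by omega)
    have e0 : n * K % n = 0 := Nat.mul_mod_right n K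
    rw [e0] at hpa
    have h1 := hnz (n - (j+2)) (by omega) (by omega)
    have h2 := hnz (j+2) (by omega) (by omega)
    have h3 := hlt (n - (j+2))
    have h4 := hlt (j+2)
    -- so ρ(n-(j+2)) + ρ(j+2) = n
    have hKne : (j+2) * K % n ≠ K := by
      intro hc
      have := rho_inj hco (m1 := j+2) (m2 := 1) (by omega) (by omega)
        (by
          have e1 : (1 : ℕ) * K % n = K := by
            rw [Nat.one_mul]
            exact Nat.mod_eq_of_lt (by omega)
          exact hc.trans e1.symm)
      omega
    omega
  have hpal : u.reverse = u := by
    apply L_ext (by simp)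
    intro i hi
    rw [List.length_reverse] at hi
    rw [L_reverse hi]
    exact hmirror i hi
  refine ⟨hpal, ?_⟩
  -- case split on K
  rcases (show K = 1 ∨ K = n - 1 ∨ (2 ≤ K ∧ K ≤ n - 2) by omega) with hc1 | hc2 | ⟨hcl, hcr⟩
  · -- all letters false
    left
    refine ⟨false, u.length, ?_⟩
    apply L_ext (by simp)
    intro i hi
    have := hletter i hi
    rw [hc1] at this
    have e1 : (i+1) * 1 % n = i + 1 := by
      rw [Nat.mul_one, Nat.mod_eq_of_lt (by omega)]
    rw [e1] at this
    have : L u i = false := by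
      cases hLui : L u i
      · rfl
      · exfalso; have := this.mp hLui; omega
    rw [this, L_replicate hi]
  · -- all letters true
    left
    refine ⟨true, u.length, ?_⟩
    apply L_ext (by simp)
    intro i hi
    have hlf := hletter i hi
    have hpa := rho_pair (K := K) hn0 (m1 := i+1) (m2 := n - (i+1)) (s := n) (by omega)
    have e0 : n * K % n = 0 := Nat.mul_mod_right n K
    rw [e0] at hpa
    have h1 := hnz (i+1) (by omega) (by omega)
    have h2 := hnz (n - (i+1)) (by omega) (by omega)
    have h3 := hlt (i+1)
    have h4 := hlt (n - (i+1))
    have : L u i = true := by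
      rw [hlf]
      omega
    rw [this, L_replicate hi]
  · -- main case : 2 ≤ K ≤ n - 2
    right
    have hnzn : NeZero n := ⟨by omega⟩
    -- find a with a * K % n = n - 1
    obtain ⟨a, haln, ha⟩ : ∃ a, a < n ∧ a * K % n = n - 1 := by
      have hu : IsUnit (K : ZMod n) := by
        rw [ZMod.isUnit_iff_coprime]
        exact hco
      obtain ⟨v, hv⟩ := hu.exists_right_inv
      refine ⟨(((n - 1 : ℕ) : ZMod n) * v).val, ZMod.val_lt _, ?_⟩
      set x : ZMod n := ((n - 1 : ℕ) : ZMod n) * v with hx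
      have e1 : ((x.val * K : ℕ) : ZMod n) = ((n - 1 : ℕ) : ZMod n) := by
        rw [Nat.cast_mul, ZMod.natCast_val, ZMod.cast_id, hx, mul_assoc,
          mul_comm v (K : ZMod n), hv, mul_one]
      calc x.val * K % n = ((x.val * K : ℕ) : ZMod n).val := (ZMod.val_natCast n _).symm
        _ = (((n - 1 : ℕ) : ZMod n)).val := by rw [e1]
        _ = (n - 1) % n := ZMod.val_natCast n _
        _ = n - 1 := Nat.mod_eq_of_lt (by omega)
    have hrN1 : (n-1) * K % n = n - K := by
      have hpa := rho_pair (K := K) hn0 (m1 := n-1) (m2 := 1) (s := n) (by omega)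
      have e0 : n * K % n = 0 := Nat.mul_mod_right n K
      have e1 : (1 : ℕ) * K % n = K := by
        rw [Nat.one_mul]; exact Nat.mod_eq_of_lt (by omega)
      have h1 := hlt (n-1)
      omega
    have ha0 : a ≠ 0 := by
      intro h
      rw [h, Nat.zero_mul, Nat.zero_mod] at ha
      omega
    have ha1 : a ≠ 1 := by
      intro h
      rw [h, Nat.one_mul, Nat.mod_eq_of_lt (by omega)] at ha
      omega
    have hanm1 : a ≠ n - 1 := by
      intro h
      rw [h, hrN1] at ha
      omega
    have ha2 : 2 ≤ a := by omega
    have han2 : a ≤ n - 2 := by omega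
    set b := n - a with hb_def
    have hb2 : 2 ≤ b := by omega
    have hbn2 : b ≤ n - 2 := by omega
    have hrB : b * K % n = 1 := by
      have hpa := rho_pair (K := K) hn0 (m1 := a) (m2 := b) (s := n) (by omega)
      have e0 : n * K % n = 0 := Nat.mul_mod_right n K
      have h1 := hnz b (by omega) (by omega)
      have h2 := hlt b
      omega
    have hrA1 : (a-1) * K % n = n - 1 - K := by
      have hpa := rho_pair (K := K) hn0 (m1 := a-1) (m2 := 1) (s := a) (by omega)
      have e1 : (1 : ℕ) * K % n = K := by
        rw [Nat.one_mul]; exact Nat.mod_eq_of_lt (by omega)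
      have h1 := hlt (a-1)
      omega
    have hrB1 : (b-1) * K % n = n + 1 - K := by
      have hpa := rho_pair (K := K) hn0 (m1 := b-1) (m2 := 1) (s := b) (by omega)
      have e1 : (1 : ℕ) * K % n = K := by
        rw [Nat.one_mul]; exact Nat.mod_eq_of_lt (by omega)
      have h1 := hlt (b-1)
      omega
    -- the four letters
    have hLa2 : L u (a-2) = false := by
      have h := hletter (a-2) (by omega)
      rw [show a-2+1 = a-1 by omega, hrA1] at h
      cases hL : L u (a-2)
      · rfl
      · have := h.mp hL; omega
    have hLa1 : L u (a-1) = true := by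
      have h := hletter (a-1) (by omega)
      rw [show a-1+1 = a by omega, ha] at h
      exact h.mpr (by omega)
    have hLb2 : L u (b-2) = true := by
      have h := hletter (b-2) (by omega)
      rw [show b-2+1 = b-1 by omega, hrB1] at h
      exact h.mpr (by omega)
    have hLb1 : L u (b-1) = false := by
      have h := hletter (b-1) (by omega)
      rw [show b-1+1 = b by omega, hrB] at h
      cases hL : L u (b-1)
      · rfl
      · have := h.mp hL; omega
    -- period a
    have hperA : ∀ j, j + a < u.length → L u (j + a) = L u j := by
      intro j hja
      have hrj := hnz (j+1) (by omega) (by omega)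
      have hltj := hlt (j+1)
      have hne1 : (j+1) * K % n ≠ 1 := by
        intro hc
        have := rho_inj hco (m1 := j+1) (m2 := b) (by omega) (by omega) (hc.trans hrB.symm)
        omega
      have hnenK : (j+1) * K % n ≠ n - K := by
        intro hc
        have := rho_inj hco (m1 := j+1) (m2 := n-1) (by omega) (by omega)
          (hc.trans hrN1.symm)
        omega
      have hpa := rho_pair (K := K) hn0 (m1 := j+1) (m2 := a) (s := j+a+1) (by omega)
      rw [ha] at hpa
      have hlts := hlt (j+a+1)
      have hrs := hnz (j+a+1) (by omega) (by omega)
      -- so ρ(j+a+1) = ρ(j+1) - 1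
      rw [Bool.eq_iff_iff, hletter _ (by omega), hletter _ (by omega)]
      omega
    -- period b
    have hperB : ∀ j, j + b < u.length → L u (j + b) = L u j := by
      intro j hjb
      have hrj := hnz (j+1) (by omega) (by omega)
      have hltj := hlt (j+1)
      have hnen1 : (j+1) * K % n ≠ n - 1 := by
        intro hc
        have := rho_inj hco (m1 := j+1) (m2 := a) (by omega) (by omega) (hc.trans ha.symm)
        omega
      have hnenK1 : (j+1) * K % n ≠ n - 1 - K := by
        intro hc
        have := rho_inj hco (m1 := j+1) (m2 := a-1) (by omega) (by omega)
          (hc.trans hrA1.symm)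
        omega
      have hpa := rho_pair (K := K) hn0 (m1 := j+1) (m2 := b) (s := j+b+1) (by omega)
      rw [hrB] at hpa
      have hlts := hlt (j+b+1)
      have hrs := hnz (j+b+1) (by omega) (by omega)
      rw [Bool.eq_iff_iff, hletter _ (by omega), hletter _ (by omega)]
      omega
    -- the two decompositions
    set p := u.take (a-2) with hp_def
    set q := u.drop a with hq_def
    have hplen : p.length = a - 2 := by
      rw [hp_def, List.length_take]; omega
    have hqlen : q.length = u.length - a := by
      rw [hq_def, List.length_drop]
    have hA : u = p ++ [false, true] ++ q := by
      have h := decomp (w := u) (i := a-2) (by omega)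
      rw [show a-2+1 = a-1 by omega, show a-2+2 = a by omega, hLa2, hLa1] at h
      exact h
    have htq : u.take (b-2) = q := by
      apply L_ext
      · rw [List.length_take, hqlen]; omega
      · intro i hi
        rw [List.length_take] at hi
        have hib : i < b - 2 := by omega
        rw [L_take hib, hq_def, L_drop]
        have := hperA i (by omega)
        rw [show i + a = a + i by omega] at this
        exact this.symm
    have hdp : u.drop b = p := by
      apply L_ext
      · rw [List.length_drop, hplen]; omega
      · intro i hi
        rw [List.length_drop] at hi
        have hia : i < a - 2 := by omega
        rw [L_drop, hp_def, L_take hia]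
        have := hperB i (by omega)
        rw [show i + b = b + i by omega] at this
        exact this
    have hB : u = q ++ [true, false] ++ p := by
      have h := decomp (w := u) (i := b-2) (by omega)
      rw [show b-2+1 = b-1 by omega, show b-2+2 = b by omega, hLb2, hLb1, htq, hdp] at h
      exact h
    -- palindromes
    have hpp : p.reverse = p := by
      apply L_ext (by simp)
      intro i hi
      rw [List.length_reverse, hplen] at hi
      rw [L_reverse (by omega : i < p.length), hplen]
      rw [hp_def, L_take (by omega), L_take (by omega)]
      -- L u (a-3-i) = L u i
      rw [Bool.eq_iff_iff, hletter _ (by omega), hletter2 _ (by omega)]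
      have hpa := rho_pair (K := K) hn0 (m1 := a-2-i) (m2 := i+2) (s := a) (by omega)
      rw [ha] at hpa
      have h1 := hlt (a-2-i)
      have h2 := hlt (i+2)
      have h3 := hnz (i+2) (by omega) (by omega)
      have hidx : a - 2 - 1 - i + 1 = a - 2 - i := by omega
      rw [hidx]
      omega
    have hqq : q.reverse = q := by
      apply L_ext (by simp)
      intro i hi
      rw [List.length_reverse, hqlen] at hi
      rw [L_reverse (by omega : i < q.length), hqlen]
      rw [hq_def, L_drop, L_drop]
      have e1 : a + (u.length - a - 1 - i) = u.length - 1 - i := by omega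
      rw [e1]
      have e2 := hmirror i (by omega)
      rw [e2]
      have := hperA i (by omega)
      rw [show i + a = a + i by omega] at this
      exact this.symm
    exact ⟨p, q, hpp, hqq, hA, hB⟩


/-! ### helpers for Part 3 -/

lemma pair0 {x y n : ℕ} (hn : 0 < n) (h : (x + y) % n = 0) :
    x % n + y % n = 0 ∨ x % n + y % n = n := by
  have h1 : x % n < n := Nat.mod_lt _ hn
  have h2 : y % n < n := Nat.mod_lt _ hn
  have h3 : (x % n + y % n) % n = 0 := by rw [← Nat.add_mod]; exact h
  have h4 : (x % n + y % n) % n =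
      if n ≤ x % n + y % n then x % n + y % n - n else x % n + y % n :=
    mod_split hn (by omega)
  split at h4 <;> omega

lemma F_drop {w : List Bool} (m : ℕ) :
    F w m + (w.drop m).count true = w.count true := by
  conv_rhs => rw [← List.take_append_drop m w]
  rw [List.count_append, F]

lemma pal_drop_count {v : List Bool} (hpal : v.reverse = v) (j : ℕ) :
    (v.drop j).count true = F v (v.length - j) := by
  have h1 : (v.drop j).count true = ((v.drop j).reverse).count true :=
    List.count_reverse.symm
  have h2 : (v.drop j).reverse = v.reverse.take (v.length - j) := by
    rw [List.reverse_drop]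
  rw [h1, h2, hpal, F]

lemma L_map_not {u : List Bool} {i : ℕ} (h : i < u.length) :
    L (u.map not) i = ! (L u i) := by
  rw [L_eq_getElem (by simpa using h), L_eq_getElem h, List.getElem_map]

lemma count_map_not (u : List Bool) :
    (u.map not).count true + u.count true = u.length := by
  induction u with
  | nil => simp
  | cons x t ih =>
    cases x <;> simp [List.count_cons] <;> omega

lemma cop_of_cop_sub {K n : ℕ} (h : Nat.Coprime (n - K) n) : Nat.Coprime K n := by
  have hd1 := Nat.gcd_dvd_left K n
  have hd2 := Nat.gcd_dvd_right K n
  have hd3 : Nat.gcd K n ∣ n - K := Nat.dvd_sub hd2 hd1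
  have hd4 : Nat.gcd K n ∣ Nat.gcd (n - K) n := Nat.dvd_gcd hd3 hd2
  rw [Nat.Coprime] at h ⊢
  rw [h] at hd4
  exact Nat.dvd_one.mp hd4

lemma div_compl {K n m : ℕ} (hn : 0 < n) (hco : Nat.Coprime K n)
    (hco2 : Nat.Coprime (n - K) n) (hm1 : 0 < m) (hm2 : m < n) (hKn : K ≤ n) :
    m * K / n + m * (n - K) / n + 1 = m := by
  have hsum : m * K + m * (n - K) = m * n := by
    calc m * K + m * (n - K) = m * (K + (n - K)) := by ring
      _ = m * n := by rw [show K + (n - K) = n by omega]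
  have hKdiv : (m * K + m * (n - K)) / n = m := by
    rw [hsum, Nat.mul_div_cancel _ hn]
  rw [Nat.add_div hn] at hKdiv
  have hm1' : m * K % n ≠ 0 := mod_nonzero hco hm1 hm2
  have hm2' : m * (n - K) % n ≠ 0 := mod_nonzero hco2 hm1 hm2
  have hmod : (m * K + m * (n - K)) % n = 0 := by
    rw [hsum, Nat.mul_mod_left]
  have hb1 : m * K % n < n := Nat.mod_lt _ hn
  have hb2 : m * (n - K) % n < n := Nat.mod_lt _ hn
  have hsn := pair0 hn hmod
  have hsum_n : m * K % n + m * (n - K) % n = n := by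
    rcases hsn with h | h <;> omega
  rw [if_pos (by omega)] at hKdiv
  omega

lemma mspec_not {u : List Bool} (hm : Mspec (u.map not)) : Mspec u := by
  obtain ⟨hco, hfl⟩ := hm
  rw [List.length_map] at hco hfl
  set n := u.length + 2 with hn
  set K := u.count true + 1 with hK
  have hcnt := count_map_not u
  have hKn : K ≤ n - 1 := by have := List.count_le_length (a := true) (l := u); omega
  have hK' : (u.map not).count true + 1 = n - K := by omega
  rw [hK'] at hco hfl
  have hco' : Nat.Coprime K n := cop_of_cop_sub hco
  refine ⟨hco', ?_⟩
  intro m hm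
  rcases Nat.eq_zero_or_pos m with h | h
  · subst h; simp [F]
  rcases Nat.eq_or_lt_of_le hm with he | hlt
  · rw [he]
    have h1 : F (W0 u) (u.length + 2) = u.count true + 1 := by
      rw [F_top (by rw [W0_length]), W0_count]
    have h2 : (u.length + 2) * (u.count true + 1) / (u.length + 2) = u.count true + 1 :=
      Nat.mul_div_cancel_left _ (by omega)
    omega
  · -- 1 ≤ m ≤ n - 1
    show F (W0 u) m = m * K / n
    have hrel : F (W0 (u.map not)) m + F (W1 u) m = m := by
      have hmap : W0 (u.map not) = (W1 u).map not := by
        rw [W0, W1]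
        simp
      rw [hmap, F, F, ← List.map_take]
      have := count_map_not ((W1 u).take (m-1+1))
      rw [show m - 1 + 1 = m by omega] at this
      have hlen : ((W1 u).take m).length = m := by
        rw [List.length_take, W1_length]; omega
      omega
    have hW1 : F (W1 u) m = F (W0 u) m + 1 := F_W1_eq (by omega) (by omega)
    have hfm := hfl m (by omega)
    have hdc := div_compl (K := K) (n := n) (m := m) (by omega) hco' hco (by omega)
      (by omega) (by omega)
    omega

/-- Farey adjacency transfer -/
lemma farey {x b K n : ℕ} (hb : 0 < b) (hn : 0 < n) (hD : K * b = x * n + 1)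
    (m : ℕ) (hm : m ≤ b) (hmn : m < n) : m * K / n = m * x / b := by
  have hdm := Nat.div_add_mod (m * x) b
  have hrlt : m * x % b < b := Nat.mod_lt _ hb
  set d := m * x / b with hd
  have low : d * n ≤ m * K := by
    have h1 : d * n * b ≤ m * K * b := by
      calc d * n * b = (b * d) * n := by ring
        _ ≤ (m * x) * n := Nat.mul_le_mul_right _ (by omega)
        _ ≤ m * (x * n + 1) := by nlinarith
        _ = m * K * b := by rw [← hD]; ring
    exact Nat.le_of_mul_le_mul_right h1 hb
  have high : m * K < (d + 1) * n := by
    have h1 : m * K * b < (d + 1) * n * b := by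
      have e1 : m * K * b = m * x * n + m := by
        calc m * K * b = m * (K * b) := by ring
          _ = m * (x * n + 1) := by rw [hD]
          _ = m * x * n + m := by ring
      have e2 : m * x * n = (b * d) * n + (m * x % b) * n := by
        calc m * x * n = (b * d + m * x % b) * n := by rw [hdm]
          _ = (b * d) * n + (m * x % b) * n := by ring
      have e3 : (m * x % b) * n + n ≤ b * n := by
        calc (m * x % b) * n + n = (m * x % b + 1) * n := by ring
          _ ≤ b * n := Nat.mul_le_mul_right _ (by omega)
      calc m * K * b = (b * d) * n + (m * x % b) * n + m := by rw [e1, e2]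
        _ < (b * d) * n + (m * x % b) * n + n := by omega
        _ ≤ (b * d) * n + b * n := by omega
        _ = (d + 1) * n * b := by ring
    exact Nat.lt_of_mul_lt_mul_right h1
  exact Nat.div_eq_of_lt_le low high

lemma mspec_replicate_false (k : ℕ) : Mspec (List.replicate k false) := by
  have hcnt : (List.replicate k false).count true = 0 := by
    simp [List.count_replicate]
  have hlen : (List.replicate k false).length = k := List.length_replicate
  constructor
  · rw [hcnt]
    exact Nat.coprime_one_left _
  · intro m hm
    rw [hlen] at hm
    rw [hcnt, hlen]
    have hW : W0 (List.replicate k false) = List.replicate (k+1) false ++ [true] := by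
      rw [W0, List.replicate_succ, List.cons_append]
    rcases Nat.eq_or_lt_of_le hm with he | hlt
    · rw [he, F_top (by rw [W0_length, hlen])]
      have h1 : (W0 (List.replicate k false)).count true = 1 := by
        rw [W0_count, hcnt]
      rw [h1]
      rw [Nat.mul_one, Nat.div_self (by omega)]
    · have h1 : F (W0 (List.replicate k false)) m = 0 := by
        rw [hW, F, List.take_append_of_le_length (by simp; omega), List.take_replicate]
        simp [List.count_replicate]
      rw [h1, Nat.mul_one, Nat.div_eq_of_lt (by omega)]

lemma mspec_replicate_true (k : ℕ) : Mspec (List.replicate k true) := by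
  have hcnt : (List.replicate k true).count true = k := by
    simp [List.count_replicate]
  have hlen : (List.replicate k true).length = k := List.length_replicate
  constructor
  · rw [hcnt, hlen]
    have h1 := Nat.gcd_dvd_left (k+1) (k+2)
    have h2 := Nat.gcd_dvd_right (k+1) (k+2)
    have h3 : Nat.gcd (k+1) (k+2) ∣ (k+2) - (k+1) := Nat.dvd_sub h2 h1
    rw [show k + 2 - (k+1) = 1 by omega] at h3
    exact Nat.dvd_one.mp h3
  · intro m hm
    rw [hlen] at hm
    rw [hcnt, hlen]
    have hW : W0 (List.replicate k true) = false :: List.replicate (k+1) true := by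
      rw [W0, ← List.replicate_succ']
    rcases Nat.eq_zero_or_pos m with h0 | h0
    · subst h0; simp [F]
    obtain ⟨m', rfl⟩ := Nat.exists_eq_add_of_le h0
    rw [Nat.add_comm 1 m']
    have h1 : F (W0 (List.replicate k true)) (m' + 1) = m' := by
      rw [hW, F, List.take_succ_cons, List.take_replicate]
      have : min m' (k+1) = m' := by omega
      rw [this]
      simp [List.count_replicate]
    rw [h1]
    symm
    apply Nat.div_eq_of_lt_le
    · nlinarith
    · nlinarith

def Per (u : List Bool) (t : ℕ) : Prop :=
  ∀ j, j + t < u.length → L u (j + t) = L u j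

lemma per_map_not {u : List Bool} {t : ℕ} (h : Per u t) : Per (u.map not) t := by
  intro j hj
  rw [List.length_map] at hj
  rw [L_map_not (by omega), L_map_not (by omega), h j hj]

lemma Ulemma : ∀ N : ℕ, ∀ u : List Bool, ∀ a b : ℕ,
    2 * u.length + (if b ≤ a then 1 else 0) ≤ N →
    2 ≤ a → 2 ≤ b → a + b = u.length + 2 →
    Per u a → Per u b →
    L u (a-2) = false → L u (a-1) = true → L u (b-2) = true → L u (b-1) = false →
    Mspec u ∧ a * (u.count true + 1) % (u.length + 2) = u.length + 1 := by
  intro N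
  induction N using Nat.strong_induction_on with
  | _ N IH =>
  intro u a b hN ha hb hab hPa hPb hA1 hA2 hB1 hB2
  set n := u.length + 2 with hn
  set K := u.count true + 1 with hK
  have hn0 : 0 < n := by omega
  have hKn : K ≤ n - 1 := by have := List.count_le_length (a := true) (l := u); omega
  have hK1 : 1 ≤ K := by omega
  have hne : a ≠ b := by
    intro h
    rw [h] at hA1
    rw [hA1] at hB1
    simp at hB1
  rcases lt_trichotomy a b with haltb | heq | hblta
  · -- a < b : main descent
    rcases Nat.eq_or_lt_of_le (show a + 1 ≤ b by omega) with hbase | hstep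
    · -- base case : b = a + 1, u = 0^(a-1) 1 0^(a-1)
      have hlen : u.length = 2*a - 1 := by omega
      have hstepL : ∀ i, i + 1 ≤ a-2 → L u i = L u (i+1) := by
        intro i hi
        have h1 := hPb i (by omega)
        have h2 := hPa (i+1) (by omega)
        rw [show i + b = i + 1 + a by omega] at h1
        exact h1.symm.trans h2
      have hpref : ∀ i, i ≤ a-2 → L u i = false := by
        have key : ∀ d, ∀ i, i ≤ a-2 → a-2-i ≤ d → L u i = false := by
          intro d
          induction d with
          | zero =>
            intro i h1 h2
            rw [show i = a - 2 by omega]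
            exact hA1
          | succ d ihd =>
            intro i h1 h2
            rcases Nat.eq_or_lt_of_le h1 with he | hlt
            · rw [he]; exact hA1
            · rw [hstepL i (by omega)]
              exact ihd (i+1) (by omega) (by omega)
        exact fun i h1 => key (a-2) i h1 (by omega)
      have hletters : ∀ j, j < u.length → L u j = decide (j = a-1) := by
        intro j hj
        rcases (show j ≤ a-2 ∨ j = a-1 ∨ (a ≤ j ∧ j - a ≤ a - 2) by omega)
          with h | h | ⟨h1, h2⟩
        · rw [hpref j h]
          have : j ≠ a - 1 := by omega
          simp [this]
        · rw [h, hA2]; simp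
        · have hper := hPa (j - a) (by omega)
          rw [show j - a + a = j by omega] at hper
          rw [hper, hpref _ h2]
          have : j ≠ a - 1 := by omega
          simp [this]
      have hFu : ∀ m, m ≤ u.length → F u m = if m ≤ a-1 then 0 else 1 := by
        intro m
        induction m with
        | zero =>
          intro _
          rw [if_pos (by omega)]
          rfl
        | succ m ihm =>
          intro hm
          rw [F_succ (by omega), ihm (by omega), hletters m (by omega)]
          have : (decide (m = a-1)).toNat = if m = a-1 then 1 else 0 := by
            by_cases h : m = a-1 <;> simp [h]
          rw [this]
          split_ifs <;> omega
      have hcount : u.count true = 1 := by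
        have h1 := hFu u.length (le_refl _)
        rw [F_top (le_refl _)] at h1
        rw [h1, if_neg (by omega)]
      have hco : Nat.Coprime K n := by
        have h1 := Nat.gcd_dvd_left K n
        have h2 := Nat.gcd_dvd_right K n
        have h3 : Nat.gcd K n ∣ 2 * a := by
          have : Nat.gcd K n ∣ K * a := Dvd.dvd.mul_right h1 a
          rw [show K * a = 2 * a by rw [hK, hcount]] at this
          exact this
        have h4 : Nat.gcd K n ∣ n - 2 * a := Nat.dvd_sub h2 h3
        rw [show n - 2*a = 1 by omega] at h4
        exact Nat.dvd_one.mp h4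
      constructor
      · refine ⟨hco, ?_⟩
        intro m hm
        show F (W0 u) m = m * K / n
        have hK2 : K = 2 := by rw [hK, hcount]
        rcases Nat.eq_zero_or_pos m with h0 | h0
        · subst h0; simp [F]
        obtain ⟨m', rfl⟩ := Nat.exists_eq_add_of_le h0
        rw [Nat.add_comm 1 m']
        rcases (show m' ≤ u.length ∨ m' = u.length + 1 by omega) with hm' | hm'
        · rw [F_W0 hm', hFu m' hm', hK2]
          rcases (show m' ≤ a - 1 ∨ (a ≤ m' ∧ m' ≤ 2*a - 1) by omega) with h | ⟨h1, h2⟩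
          · rw [if_pos h]
            symm
            apply Nat.div_eq_of_lt
            omega
          · rw [if_neg (by omega)]
            symm
            apply Nat.div_eq_of_lt_le
            · omega
            · omega
        · rw [hm']
          have hend : F (W0 u) (u.length + 1 + 1) = K := by
            rw [F_top (by rw [W0_length])]
            rw [W0_count]
          have hdiv : (u.length + 1 + 1) * 2 / n = 2 := by
            rw [show u.length + 1 + 1 = n by omega]
            exact Nat.mul_div_cancel_left _ hn0
          rw [hend, hK2, hdiv]
      · have h1 : a * K = a * 2 := by rw [hK, hcount]
        rw [h1, Nat.mod_eq_of_lt (by omega)]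
        omega
    · -- step case : a + 2 ≤ b
      set v := u.take (b-2) with hv
      have hvlen : v.length = b - 2 := by
        rw [hv, List.length_take]; omega
      have hLv : ∀ i, i < b-2 → L v i = L u i := by
        intro i hi
        rw [hv, L_take hi]
      have hPva : Per v a := by
        intro j hj
        rw [hvlen] at hj
        rw [hLv _ (by omega), hLv _ (by omega)]
        exact hPa j (by omega)
      have hPvba : Per v (b-a) := by
        intro j hj
        rw [hvlen] at hj
        have h1 := hPa (j + (b-a)) (by omega)
        have h2 := hPb j (by omega)
        rw [show j + (b-a) + a = j + b by omega] at h1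
        rw [hLv _ (by omega), hLv _ (by omega)]
        exact (h1.symm.trans h2)
      have hv_a1 : L v (a-2) = false := by rw [hLv _ (by omega)]; exact hA1
      have hv_a2 : L v (a-1) = true := by rw [hLv _ (by omega)]; exact hA2
      have hv_b1 : L v (b-a-2) = true := by
        rw [hLv _ (by omega)]
        have h1 := hPa (b-a-2) (by omega)
        rw [show b-a-2+a = b-2 by omega] at h1
        rw [← h1]
        exact hB1
      have hv_b2 : L v (b-a-1) = false := by
        rw [hLv _ (by omega)]
        have h1 := hPa (b-a-1) (by omega)
        rw [show b-a-1+a = b-1 by omega] at h1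
        rw [← h1]
        exact hB2
      have hres := IH (2 * v.length + 1) (by omega) v a (b-a)
        (by split <;> omega) ha (by omega) (by omega)
        hPva hPvba hv_a1 hv_a2 hv_b1 hv_b2
      obtain ⟨⟨hcov, hflv⟩, hstrv⟩ := hres
      rw [hvlen] at hcov hflv hstrv
      set x := v.count true + 1 with hx
      have hb2n : b = (b - 2) + 2 := by omega
      rw [← hb2n] at hcov hflv hstrv
      -- v is a palindrome
      have hvpal : v.reverse = v := (part2 ⟨by rw [hvlen, ← hb2n]; exact hcov,
        by rw [hvlen, ← hb2n]; exact hflv⟩).1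
      -- c facts
      have e3 : F (W0 v) (a-1) = F v (a-2) := by
        have := F_W0 (u := v) (l := a-2) (by omega)
        rw [show a-2+1 = a-1 by omega] at this
        exact this
      have e4 : F (W0 v) a = F v (a-1) := by
        have := F_W0 (u := v) (l := a-1) (by omega)
        rw [show a-1+1 = a by omega] at this
        exact this
      have e5 : F v (a-1) = F v (a-2) + (L v (a-2)).toNat := by
        have := F_succ (w := v) (m := a-2) (by omega)
        rw [show a-2+1 = a-1 by omega] at this
        exact this
      rw [hv_a1] at e5
      have e1 : F (W0 v) (a-1) = (a-1) * x / b := hflv (a-1) (by omega)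
      have e2 : F (W0 v) a = a * x / b := hflv a (by omega)
      have e6 : a * x / b = F v (a-2) := by
        rw [← e2, e4, e5]
        simp
      have hdm := Nat.div_add_mod (a*x) b
      rw [e6, hstrv] at hdm
      -- hdm : b * F v (a-2) + (b-2+2-1) = a * x
      have hax : a * x + 1 = b * F v (a-2) + b := by omega
      -- decompositions
      have hdrop_a : u.drop a = v := by
        apply L_ext
        · rw [List.length_drop, hvlen]; omega
        · intro i hi
          rw [List.length_drop] at hi
          rw [L_drop, hLv _ (by omega)]
          have := hPa i (by omega)
          rw [show i + a = a + i by omega] at this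
          exact this
      have hU2 : u = u.take (a-2) ++ [false, true] ++ v := by
        have h := decomp (w := u) (i := a-2) (by omega)
        rw [show a-2+1 = a-1 by omega, show a-2+2 = a by omega, hA1, hA2, hdrop_a] at h
        exact h
      have htake_head : u.take (a-2) = v.take (a-2) := by
        apply L_ext
        · rw [List.length_take, List.length_take, hvlen]; omega
        · intro i hi
          rw [List.length_take] at hi
          rw [L_take (by omega), L_take (by omega), hLv _ (by omega)]
      -- count of u
      have hcntu : u.count true + 1 = x + F v (a-2) + 1 := by
        have h := congrArg (List.count true) hU2
        rw [List.count_append, List.count_append] at h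
        rw [htake_head] at h
        have h2 : (List.count true [false, true]) = 1 := by simp
        rw [h2] at h
        rw [hx]
        have : (v.take (a-2)).count true = F v (a-2) := rfl
        omega
      have hKxc : K = x + F v (a-2) + 1 := by rw [hK, hcntu]
      -- the Farey relation K * b = x * n + 1
      have hone : K * b = x * n + 1 := by
        calc K * b = (x + F v (a-2) + 1) * b := by rw [hKxc]
          _ = x * b + (b * F v (a-2) + b) := by ring
          _ = x * b + (a * x + 1) := by rw [← hax]
          _ = x * (a + b) + 1 := by ring
          _ = x * n + 1 := by rw [hab]
      have hco : Nat.Coprime K n := by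
        have h1 : Nat.gcd K n ∣ K * b := Dvd.dvd.mul_right (Nat.gcd_dvd_left _ _) b
        have h2 : Nat.gcd K n ∣ x * n := Dvd.dvd.mul_left (Nat.gcd_dvd_right _ _) x
        have h3 := Nat.dvd_sub h1 h2
        rw [show K * b - x * n = 1 by omega] at h3
        exact Nat.dvd_one.mp h3
      -- prefix counts agree with v for m ≤ b
      have htake_eq : ∀ j, j ≤ b-2 → u.take j = v.take j := by
        intro j hj
        rw [hv, List.take_take]
        congr 1
        omega
      have hpre : ∀ m, m ≤ b → F (W0 u) m = F (W0 v) m := by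
        intro m hm
        rcases Nat.eq_zero_or_pos m with h0 | h0
        · subst h0; rfl
        obtain ⟨m', rfl⟩ := Nat.exists_eq_add_of_le h0
        rw [Nat.add_comm 1 m']
        rcases (show m' ≤ b - 2 ∨ m' = b - 1 by omega) with hm' | hm'
        · rw [F_W0 (by omega), F_W0 (by omega)]
          show (u.take m').count true = (v.take m').count true
          rw [htake_eq m' hm']
        · rw [hm']
          have hFu1 : F u (b-1) = F u (b-2) + (L u (b-2)).toNat := by
            have := F_succ (w := u) (m := b-2) (by omega)
            rw [show b-2+1 = b-1 by omega] at this
            exact this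
          rw [hB1] at hFu1
          have hFu2 : F u (b-2) = v.count true := by
            show (u.take (b-2)).count true = v.count true
            rw [← hv]
          have hW0u : F (W0 u) (b-1+1) = F u (b-1) := F_W0 (by omega)
          have hW0v : F (W0 v) (b-1+1) = (W0 v).count true := by
            apply F_top
            rw [W0_length, hvlen]
            omega
          rw [hW0u, hW0v, W0_count, hFu1, hFu2]
          simp
      have hfl : ∀ m ≤ n, F (W0 u) m = m * K / n := by
        intro m hm
        rcases (show m ≤ b ∨ (b < m ∧ m < n) ∨ m = n by omega) with hmb | ⟨hm1, hm2⟩ | hmn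
        · rw [hpre m hmb, hflv m hmb]
          exact (farey (by omega) hn0 hone m hmb (by omega)).symm
        · -- suffix case
          have hℓ : 1 ≤ n - m ∧ n - m ≤ a - 1 := by omega
          have hsplitW : F (W0 u) m + ((W0 u).drop m).count true = K := by
            have := F_drop (w := W0 u) m
            rw [W0_count] at this
            exact this
          have hsfx : ((W0 u).drop m).count true = F v (n - m - 1) + 1 := by
            have h1 : (W0 u).drop m = (u ++ [true]).drop (m-1) := by
              conv_lhs => rw [W0, show m = m - 1 + 1 by omega]
              rw [List.drop_succ_cons]
            have h2 : (u ++ [true]).drop (m-1) = u.drop (m-1) ++ [true] := by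
              rw [List.drop_append_of_le_length (by omega)]
            have h3 : u.drop (m-1) = v.drop (m-1-a) := by
              conv_lhs =>
                rw [hU2, show m - 1 = ((u.take (a-2)) ++ [false, true]).length + (m-1-a) by
                  simp [List.length_take]; omega]
              rw [List.drop_length_add_append]
            have h4 : (v.drop (m-1-a)).count true = F v (v.length - (m-1-a)) :=
              pal_drop_count hvpal _
            rw [h1, h2, List.count_append, h3, h4]
            have he : v.length - (m-1-a) = n - m - 1 := by omega
            rw [he]
            simp
          have hFv : F v (n - m - 1) = (n - m) * K / n := by
            have hW : F (W0 v) (n - m) = F v (n - m - 1) := by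
              have := F_W0 (u := v) (l := n - m - 1) (by omega)
              rw [show n - m - 1 + 1 = n - m by omega] at this
              exact this
            rw [← hW, hflv (n - m) (by omega)]
            exact (farey (by omega) hn0 hone (n - m) (by omega) (by omega)).symm
          have hrefl := reflect hn0 hco (i := m) (by omega) (by omega)
          omega
        · rw [hmn]
          have h1 : F (W0 u) n = K := by
            rw [F_top (by rw [W0_length]), W0_count]
          rw [h1, Nat.mul_div_cancel_left _ hn0]
      have hbK1 : b * K % n = 1 := by
        have hbn : b * K = n * x + 1 := by rw [Nat.mul_comm b K, hone, Nat.mul_comm x n]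
        rw [hbn, Nat.mul_add_mod]
        exact Nat.mod_eq_of_lt (by omega)
      have haK : a * K % n = n - 1 := by
        have hsum : (a * K + b * K) % n = 0 := by
          rw [show a * K + b * K = n * K by rw [← Nat.add_mul, hab]]
          exact Nat.mul_mod_right _ _
        have := pair0 hn0 hsum
        rw [hbK1] at this
        have h1 : a * K % n < n := Nat.mod_lt _ hn0
        omega
      exact ⟨⟨hco, hfl⟩, by rw [haK]; omega⟩
  · exact absurd heq hne
  · -- b < a : complement
    have hind : (if b ≤ a then 1 else 0) = 1 := by rw [if_pos (by omega)]
    have hlenm : (u.map not).length = u.length := List.length_map _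
    have hres := IH (2 * u.length) (by omega) (u.map not) b a
      (by rw [hlenm, if_neg (by omega)]; omega) hb ha (by rw [hlenm]; omega)
      (per_map_not hPb) (per_map_not hPa)
      (by rw [L_map_not (by omega), hB1]; rfl)
      (by rw [L_map_not (by omega), hB2]; rfl)
      (by rw [L_map_not (by omega), hA1]; rfl)
      (by rw [L_map_not (by omega), hA2]; rfl)
    obtain ⟨hMnot, hstr⟩ := hres
    refine ⟨mspec_not hMnot, ?_⟩
    have hcnt := count_map_not u
    rw [hlenm] at hstr
    have hKnot : (u.map not).count true + 1 = n - K := by omega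
    rw [hKnot] at hstr
    -- hstr : b * (n - K) % n = n - 1 ; want a * K % n = n - 1
    have hbK : b * K % n = 1 := by
      have hsum : (b * (n - K) + b * K) % n = 0 := by
        rw [show b * (n-K) + b * K = b * n by
          rw [← Nat.mul_add, show n - K + K = n by omega]]
        exact Nat.mul_mod_left _ _
      have := pair0 hn0 hsum
      rw [hstr] at this
      have h1 : b * K % n < n := Nat.mod_lt _ hn0
      omega
    have hsum2 : (a * K + b * K) % n = 0 := by
      rw [show a * K + b * K = n * K by rw [← Nat.add_mul, hab]]
      exact Nat.mul_mod_right _ _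
    have := pair0 hn0 hsum2
    rw [hbK] at this
    have h1 : a * K % n < n := Nat.mod_lt _ hn0
    show a * K % n = u.length + 1
    omega

lemma part3 {u : List Bool} (h : RHSpred u) : Mspec u := by
  obtain ⟨hpal, hcase⟩ := h
  rcases hcase with ⟨c, k, rfl⟩ | ⟨p, q, hpp, hqq, hA, hB⟩
  · cases c
    · exact mspec_replicate_false k
    · exact mspec_replicate_true k
  · have hlen : u.length = p.length + q.length + 2 := by
      have := congrArg List.length hA
      simp [List.length_append] at this
      omega
    have hqdrop : u.drop (p.length + 2) = q := by
      conv_lhs => rw [hA, show p.length + 2 = (p ++ [false, true]).length by simp]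
      exact List.drop_left
    have hqtake : u.take q.length = q := by
      conv_lhs => rw [hB, List.append_assoc]
      exact List.take_left
    have hpdrop : u.drop (q.length + 2) = p := by
      conv_lhs => rw [hB, show q.length + 2 = (q ++ [true, false]).length by simp]
      exact List.drop_left
    have hptake : u.take p.length = p := by
      conv_lhs => rw [hA, List.append_assoc]
      exact List.take_left
    have hPa : Per u (p.length + 2) := by
      intro j hj
      have h1 : L u (j + (p.length + 2)) = L q j := by
        rw [show j + (p.length + 2) = (p.length + 2) + j by omega, ← L_drop, hqdrop]
      have h2 : L u j = L q j := by
        rw [← hqtake, L_take (by omega)]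
      rw [h1, h2]
    have hPb : Per u (q.length + 2) := by
      intro j hj
      have h1 : L u (j + (q.length + 2)) = L p j := by
        rw [show j + (q.length + 2) = (q.length + 2) + j by omega, ← L_drop, hpdrop]
      have h2 : L u j = L p j := by
        rw [← hptake, L_take (by omega)]
      rw [h1, h2]
    have hma1 : L u p.length = false := by
      rw [hA, List.append_assoc, L_append_right (le_refl _), Nat.sub_self]
      rfl
    have hma2 : L u (p.length + 1) = true := by
      rw [hA, List.append_assoc, L_append_right (by omega), show p.length + 1 - p.length = 1 by omega]
      rfl
    have hmb1 : L u q.length = true := by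
      rw [hB, List.append_assoc, L_append_right (le_refl _), Nat.sub_self]
      rfl
    have hmb2 : L u (q.length + 1) = false := by
      rw [hB, List.append_assoc, L_append_right (by omega), show q.length + 1 - q.length = 1 by omega]
      rfl
    have hres := Ulemma (2 * u.length + 1) u (p.length + 2) (q.length + 2)
      (by split <;> omega) (by omega) (by omega) (by omega) hPa hPb
      (by rw [show p.length + 2 - 2 = p.length by omega]; exact hma1)
      (by rw [show p.length + 2 - 1 = p.length + 1 by omega]; exact hma2)
      (by rw [show q.length + 2 - 2 = q.length by omega]; exact hmb1)
      (by rw [show q.length + 2 - 1 = q.length + 1 by omega]; exact hmb2)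
    exact hres.1

end CC

/-- A binary word is central iff it is a palindrome and is either a power of a single
letter, or of the form `p01q = q10p` with `p`, `q` palindromes. -/
theorem central_characterization (u : List Bool) :
    Central u ↔
      (u.reverse = u ∧
        ((∃ (a : Bool) (n : ℕ), u = List.replicate n a) ∨
          ∃ p q : List Bool, p.reverse = p ∧ q.reverse = q ∧
            u = p ++ [false, true] ++ q ∧ u = q ++ [true, false] ++ p)) := by
  constructor
  · intro h
    exact CC.part2 (CC.part1 h)
  · intro h
    exact CC.part4 (CC.part3 h)
end

section
/- (Three gap theorem, Slater) Let α be irrational with 0 < α < 1, and let 0 < β < 1/2. The set of gaps n_{i+1} − n_i between successive nonnegative integers n with {nα} < β has either two or three elements, and in the three-element case one of the gaps equals the sum of the other two. -/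
private lemma fract_add_fract' (x y : ℝ) :
    Int.fract (x + y) = Int.fract (Int.fract x + Int.fract y) := by
  rw [Int.fract_eq_iff]
  refine ⟨Int.fract_nonneg _, Int.fract_lt_one _,
    ⟨⌊x⌋ + ⌊y⌋ + ⌊Int.fract x + Int.fract y⌋, ?_⟩⟩
  have h1 := Int.fract_add_floor x
  have h2 := Int.fract_add_floor y
  have h3 := Int.fract_add_floor (Int.fract x + Int.fract y)
  push_cast
  linarith

private lemma fract_sub_fract' (x y : ℝ) :
    Int.fract (x - y) = Int.fract (Int.fract x - Int.fract y) := by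
  rw [Int.fract_eq_iff]
  refine ⟨Int.fract_nonneg _, Int.fract_lt_one _,
    ⟨⌊x⌋ - ⌊y⌋ + ⌊Int.fract x - Int.fract y⌋, ?_⟩⟩
  have h1 := Int.fract_add_floor x
  have h2 := Int.fract_add_floor y
  have h3 := Int.fract_add_floor (Int.fract x - Int.fract y)
  push_cast
  linarith

private lemma fract_eval_lo {t : ℝ} (h1 : 0 ≤ t) (h2 : t < 1) : Int.fract t = t :=
  Int.fract_eq_self.2 ⟨h1, h2⟩

private lemma fract_eval_hi {t : ℝ} (h1 : 1 ≤ t) (h2 : t < 2) : Int.fract t = t - 1 :=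
  Int.fract_eq_iff.2 ⟨by linarith, by linarith, ⟨1, by push_cast; ring⟩⟩

private lemma fract_eval_neg {t : ℝ} (h1 : -1 < t) (h2 : t < 0) : Int.fract t = t + 1 :=
  Int.fract_eq_iff.2 ⟨by linarith, by linarith, ⟨-1, by push_cast; ring⟩⟩

private lemma fract_step (α : ℝ) (n d : ℕ) :
    Int.fract (((n : ℝ) + d) * α) = Int.fract (Int.fract (n * α) + Int.fract (d * α)) := by
  rw [add_mul, fract_add_fract']

private lemma fract_nsmul_low (α : ℝ) (d : ℕ) :
    ∀ j : ℕ, (j : ℝ) * Int.fract (d * α) < 1 →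
      Int.fract ((↑(j * d) : ℝ) * α) = j * Int.fract (d * α) := by
  intro j
  induction j with
  | zero => simp
  | succ k ih =>
    intro h
    have hf0 : 0 ≤ Int.fract ((d : ℝ) * α) := Int.fract_nonneg _
    have hkc : (k : ℝ) ≥ 0 := by positivity
    have hk : (k : ℝ) * Int.fract ((d : ℝ) * α) < 1 := by
      push_cast at h; nlinarith
    have e1 : ((↑((k + 1) * d) : ℝ)) * α = (↑(k * d) : ℝ) * α + (d : ℝ) * α := by
      push_cast; ring
    rw [e1, fract_add_fract', ih hk,
      fract_eval_lo (by positivity) (by push_cast at h ⊢; nlinarith)]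
    push_cast; ring

private lemma fract_nsmul_high (α : ℝ) (d : ℕ) :
    ∀ j : ℕ, 0 < j → (j : ℝ) * (1 - Int.fract (d * α)) < 1 →
      Int.fract ((↑(j * d) : ℝ) * α) = 1 - j * (1 - Int.fract (d * α)) := by
  intro j
  induction j with
  | zero => intro h; omega
  | succ k ih =>
    intro _ h
    have hf1 : Int.fract ((d : ℝ) * α) < 1 := Int.fract_lt_one _
    have hf0 : 0 ≤ Int.fract ((d : ℝ) * α) := Int.fract_nonneg _
    rcases Nat.eq_zero_or_pos k with hk | hk
    · subst hk; simp
    · have hg0 : (0 : ℝ) < 1 - Int.fract ((d : ℝ) * α) := by linarith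
      have hkk : (1:ℝ) ≤ (k : ℝ) := by exact_mod_cast hk
      have hk1 : (k : ℝ) * (1 - Int.fract ((d : ℝ) * α)) < 1 := by
        push_cast at h; nlinarith
      have e1 : ((↑((k + 1) * d) : ℝ)) * α = (↑(k * d) : ℝ) * α + (d : ℝ) * α := by
        push_cast; ring
      rw [e1, fract_add_fract', ih hk hk1,
        fract_eval_hi (by push_cast at h ⊢; nlinarith) (by push_cast; nlinarith)]
      push_cast; ring



private lemma irrational_fract_nat_mul {α : ℝ} (hα : Irrational α) {d : ℕ} (hd : 0 < d) :
    Irrational (Int.fract ((d : ℝ) * α)) := by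
  rw [← Int.self_sub_floor]
  exact (hα.natCast_mul hd.ne').sub_intCast _

private lemma fract_nat_mul_pos {α : ℝ} (hα : Irrational α) {d : ℕ} (hd : 0 < d) :
    0 < Int.fract ((d : ℝ) * α) :=
  lt_of_le_of_ne (Int.fract_nonneg _) (Ne.symm (irrational_fract_nat_mul hα hd).ne_zero)

/-- floor trick: from a small positive fractional part, get one close to 1. -/
private lemma exists_high_of_low {α : ℝ} (hα : Irrational α) {ε : ℝ} (he0 : 0 < ε) (he1 : ε < 1)
    (h : ∃ d : ℕ, 0 < d ∧ Int.fract ((d : ℝ) * α) < ε) :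
    ∃ d : ℕ, 0 < d ∧ 1 - ε < Int.fract ((d : ℝ) * α) := by
  obtain ⟨d, hd, hfe⟩ := h
  set f := Int.fract ((d : ℝ) * α) with hf
  have hf0 : 0 < f := fract_nat_mul_pos hα hd
  have hfirr : Irrational f := irrational_fract_nat_mul hα hd
  set k := ⌊1 / f⌋₊ with hk
  have hk1 : 1 ≤ k := Nat.le_floor (by rw [le_div_iff₀ hf0]; push_cast; linarith)
  have hkle : (k : ℝ) < 1 / f := by
    refine lt_of_le_of_ne (Nat.floor_le (by positivity)) ?_
    intro hcon
    exact (hfirr.inv.ne_nat k) (by rw [hcon, one_div])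
  have hkgt : 1 / f < (k : ℝ) + 1 := Nat.lt_floor_add_one _
  have hkf : (k : ℝ) * f < 1 := by
    rw [lt_div_iff₀ hf0] at hkle; linarith
  have hkf2 : 1 < ((k : ℝ) + 1) * f := by
    rw [div_lt_iff₀ hf0] at hkgt; linarith
  refine ⟨k * d, by positivity, ?_⟩
  rw [fract_nsmul_low α d k hkf, ← hf]
  nlinarith

/-- floor trick: from a fractional part close to 1, get a small positive one. -/
private lemma exists_low_of_high {α : ℝ} (hα : Irrational α) {ε : ℝ} (he0 : 0 < ε) (he1 : ε < 1)
    (h : ∃ d : ℕ, 0 < d ∧ 1 - ε < Int.fract ((d : ℝ) * α)) :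
    ∃ d : ℕ, 0 < d ∧ 0 < Int.fract ((d : ℝ) * α) ∧ Int.fract ((d : ℝ) * α) < ε := by
  obtain ⟨d, hd, hfe⟩ := h
  set g := 1 - Int.fract ((d : ℝ) * α) with hg
  have hg0 : 0 < g := by have := Int.fract_lt_one ((d : ℝ) * α); simp only [hg]; linarith
  have hge : g < ε := by simp only [hg]; linarith
  have hgirr : Irrational g := by
    rw [hg, show (1 : ℝ) = ((1 : ℤ) : ℝ) by norm_num]
    exact (irrational_fract_nat_mul hα hd).intCast_sub 1
  set k := ⌊1 / g⌋₊ with hk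
  have hk1 : 1 ≤ k := Nat.le_floor (by rw [le_div_iff₀ hg0]; push_cast; linarith)
  have hkle : (k : ℝ) < 1 / g := by
    refine lt_of_le_of_ne (Nat.floor_le (by positivity)) ?_
    intro hcon
    exact (hgirr.inv.ne_nat k) (by rw [hcon, one_div])
  have hkgt : 1 / g < (k : ℝ) + 1 := Nat.lt_floor_add_one _
  have hkf : (k : ℝ) * g < 1 := by
    rw [lt_div_iff₀ hg0] at hkle; linarith
  have hkf2 : 1 < ((k : ℝ) + 1) * g := by
    rw [div_lt_iff₀ hg0] at hkgt; linarith
  refine ⟨k * d, by positivity, ?_⟩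
  rw [fract_nsmul_high α d k hk1 (by rw [← hg]; exact hkf)]
  constructor
  · rw [← hg]; linarith
  · rw [← hg]; nlinarith

/-- For any `0 < ε < 1` there is `d > 0` with `0 < fract (d α) < ε`. -/
private lemma exists_low {α : ℝ} (hα : Irrational α) {ε : ℝ} (he0 : 0 < ε) (he1 : ε < 1) :
    ∃ d : ℕ, 0 < d ∧ 0 < Int.fract ((d : ℝ) * α) ∧ Int.fract ((d : ℝ) * α) < ε := by
  -- density of the subgroup generated by 1 and α
  have hdense : Dense ((AddSubgroup.closure ({1, α} : Set ℝ) : AddSubgroup ℝ) : Set ℝ) := by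
    rcases AddSubgroup.dense_or_cyclic (AddSubgroup.closure ({1, α} : Set ℝ)) with h | ⟨g, hg⟩
    · exact h
    · exfalso
      have h1 : (1 : ℝ) ∈ AddSubgroup.closure ({1, α} : Set ℝ) :=
        AddSubgroup.subset_closure (by simp)
      have h2 : α ∈ AddSubgroup.closure ({1, α} : Set ℝ) :=
        AddSubgroup.subset_closure (by simp)
      rw [hg, AddSubgroup.mem_closure_singleton] at h1 h2
      obtain ⟨m, hm⟩ := h1
      obtain ⟨n, hn⟩ := h2
      have hm0 : m ≠ 0 := by rintro rfl; simp at hm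
      rw [zsmul_eq_mul] at hm hn
      have key : α * (m : ℝ) = (n : ℝ) := by
        rw [← hn, show ((n : ℝ)) * g * (m : ℝ) = (n : ℝ) * ((m : ℝ) * g) by ring, hm, mul_one]
      have hmR : (m : ℝ) ≠ 0 := Int.cast_ne_zero.2 hm0
      refine hα ⟨(n : ℚ) / (m : ℚ), ?_⟩
      push_cast
      field_simp
      linarith [key]
  obtain ⟨x, hxmem, hx⟩ := hdense.exists_mem_open isOpen_Ioo (Set.nonempty_Ioo.2 he0)
  rw [SetLike.mem_coe, AddSubgroup.mem_closure_pair] at hxmem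
  obtain ⟨m, n, hmn⟩ := hxmem
  obtain ⟨hx0, hx1⟩ := hx
  have hxe : x < 1 := lt_of_lt_of_le hx1 he1.le
  have hn0 : n ≠ 0 := by
    rintro rfl
    simp only [zero_zsmul, add_zero, zsmul_eq_mul, mul_one, Int.cast_zero, zero_mul] at hmn
    have h1 : (0 : ℝ) < (m : ℝ) := by rw [hmn]; exact hx0
    have h2 : (m : ℝ) < 1 := by rw [hmn]; exact hxe
    have h3 : (0 : ℤ) < m := by exact_mod_cast h1
    have h4 : m < 1 := by exact_mod_cast h2
    omega
  simp only [zsmul_eq_mul, mul_one] at hmn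
  rcases lt_trichotomy n 0 with hn | hn | hn
  · -- n < 0 : get a high witness, then convert
    apply exists_low_of_high hα he0 he1
    refine ⟨(-n).toNat, by omega, ?_⟩
    have hcast : (((-n).toNat : ℕ) : ℝ) = -(n : ℝ) := by
      have h := Int.toNat_of_nonneg (by omega : (0 : ℤ) ≤ -n)
      exact_mod_cast congrArg (Int.cast : ℤ → ℝ) h
    have heq : (((-n).toNat : ℕ) : ℝ) * α = ((m : ℤ) : ℝ) + (-x) := by
      rw [hcast]; push_cast; linarith [hmn]
    rw [heq, Int.fract_intCast_add, fract_eval_neg (by linarith) (by linarith)]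
    linarith
  · exact absurd hn hn0
  · -- n > 0 : direct low witness
    refine ⟨n.toNat, by omega, ?_⟩
    have hcast : ((n.toNat : ℕ) : ℝ) = (n : ℝ) := by
      have h := Int.toNat_of_nonneg (by omega : (0 : ℤ) ≤ n)
      exact_mod_cast congrArg (Int.cast : ℤ → ℝ) h
    have heq : ((n.toNat : ℕ) : ℝ) * α = (x - ((m : ℤ) : ℝ)) := by
      rw [hcast]; push_cast; linarith [hmn]
    rw [heq, Int.fract_sub_intCast, fract_eval_lo hx0.le hxe]
    exact ⟨hx0, hx1⟩

private lemma exists_orbit_in_Ioo {α : ℝ} (hα : Irrational α) {u v : ℝ} (hu : 0 ≤ u)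
    (huv : u < v) (hv : v ≤ 1) :
    ∃ n : ℕ, 0 < n ∧ u < Int.fract ((n : ℝ) * α) ∧ Int.fract ((n : ℝ) * α) < v := by
  set ε := min (v - u) (1 / 2) with hε
  have hε0 : 0 < ε := lt_min (by linarith) (by norm_num)
  have hε1 : ε < 1 := lt_of_le_of_lt (min_le_right _ _) (by norm_num)
  have hεvu : ε ≤ v - u := min_le_left _ _
  obtain ⟨d, hd, hf0, hfε⟩ := exists_low hα hε0 hε1
  set f := Int.fract ((d : ℝ) * α) with hf
  set j := ⌊u / f⌋₊ + 1 with hj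
  have hju : u < (j : ℝ) * f := by
    have h := Nat.lt_floor_add_one (u / f)
    rw [div_lt_iff₀ hf0] at h
    push_cast [hj]
    linarith
  have hjv : (j : ℝ) * f < v := by
    have h1 : (⌊u / f⌋₊ : ℝ) ≤ u / f := Nat.floor_le (by positivity)
    have h2 : (⌊u / f⌋₊ : ℝ) * f ≤ u := by
      rw [← le_div_iff₀ hf0]; exact h1
    push_cast [hj]
    nlinarith
  have hj1 : (j : ℝ) * f < 1 := lt_of_lt_of_le hjv hv
  refine ⟨j * d, by positivity, ?_, ?_⟩
  · rw [fract_nsmul_low α d j hj1, ← hf]; exact hju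
  · rw [fract_nsmul_low α d j hj1, ← hf]; exact hjv
/-- Three gap theorem (Slater): for irrational `0 < α < 1` and `0 < β < 1/2`, the gaps
between successive nonnegative integers `n` with `{nα} < β` take two or three values,
and in the latter case one value is the sum of the other two. -/
theorem three_gap (α β : ℝ) (hα : Irrational α) (h0 : 0 < α) (h1 : α < 1)
    (hb0 : 0 < β) (hb : β < 1 / 2) :
    Set.ncard {d : ℕ | 0 < d ∧ ∃ n : ℕ, Int.fract (n * α) < β ∧
        Int.fract ((n + d) * α) < β ∧
        ∀ m : ℕ, n < m → m < n + d → ¬ Int.fract (m * α) < β} = 2 ∨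
      ∃ a b : ℕ, a ≠ b ∧
        {d : ℕ | 0 < d ∧ ∃ n : ℕ, Int.fract (n * α) < β ∧
          Int.fract ((n + d) * α) < β ∧
          ∀ m : ℕ, n < m → m < n + d → ¬ Int.fract (m * α) < β} = {a, b, a + b} := by
  classical
  have hb1 : β < 1 := by linarith
  have hQb : ∃ d : ℕ, 0 < d ∧ Int.fract ((d : ℝ) * α) < β := by
    obtain ⟨d, h1, _, h3⟩ := exists_low hα hb0 hb1
    exact ⟨d, h1, h3⟩
  have hQa : ∃ d : ℕ, 0 < d ∧ 1 - β < Int.fract ((d : ℝ) * α) :=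
    exists_high_of_low hα hb0 hb1 hQb
  set b := Nat.find hQb with hbdef
  set a := Nat.find hQa with hadef
  obtain ⟨hb_pos, hb_lt⟩ := Nat.find_spec hQb
  obtain ⟨ha_pos, ha_gt⟩ := Nat.find_spec hQa
  set fa := Int.fract ((a : ℝ) * α) with hfa
  set fb := Int.fract ((b : ℝ) * α) with hfb
  have hfa1 : fa < 1 := Int.fract_lt_one _
  have hfa0 : 0 ≤ fa := Int.fract_nonneg _
  have hfb0 : 0 < fb := fract_nat_mul_pos hα hb_pos
  have hfb_lt : fb < β := hb_lt
  have hfa_gt : 1 - β < fa := ha_gt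
  have hab : a ≠ b := by
    intro h
    have heq : fa = fb := by rw [hfa, hfb, h]
    rw [heq] at hfa_gt
    linarith
  have hb_min : ∀ e : ℕ, 0 < e → Int.fract ((e : ℝ) * α) < β → b ≤ e :=
    fun e he hf => Nat.find_min' hQb ⟨he, hf⟩
  have ha_min : ∀ e : ℕ, 0 < e → 1 - β < Int.fract ((e : ℝ) * α) → a ≤ e :=
    fun e he hf => Nat.find_min' hQa ⟨he, hf⟩
  -- minimality within one period
  have hL2 : ∀ e : ℕ, 0 < e → e < a + b → Int.fract ((e : ℝ) * α) < β →
      fb ≤ Int.fract ((e : ℝ) * α) := by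
    intro e he hlt hfe
    by_contra hcon
    push_neg at hcon
    have hbe : b ≤ e := hb_min e he hfe
    have hblt : b < e := by
      cases' hbe.lt_or_eq with h h
      · exact h
      · exfalso; rw [h] at hfb; rw [← hfb] at hcon; exact lt_irrefl _ hcon
    have hcast : ((e - b : ℕ) : ℝ) * α = (e : ℝ) * α - (b : ℝ) * α := by
      rw [Nat.cast_sub hbe]; ring
    have h1 : Int.fract (((e - b : ℕ) : ℝ) * α) = Int.fract ((e : ℝ) * α) - fb + 1 := by
      rw [hcast, fract_sub_fract', ← hfb,
        fract_eval_neg (by linarith [Int.fract_nonneg ((e : ℝ) * α)]) (by linarith)]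
    have h2 : a ≤ e - b :=
      ha_min _ (by omega) (by rw [h1]; linarith [Int.fract_nonneg ((e : ℝ) * α)])
    omega
  have hL1 : ∀ e : ℕ, 0 < e → e < a + b → 1 - β < Int.fract ((e : ℝ) * α) →
      Int.fract ((e : ℝ) * α) ≤ fa := by
    intro e he hlt hfe
    by_contra hcon
    push_neg at hcon
    have hae : a ≤ e := ha_min e he hfe
    have halt : a < e := by
      cases' hae.lt_or_eq with h h
      · exact h
      · exfalso; rw [h] at hfa; rw [← hfa] at hcon; exact lt_irrefl _ hcon
    have hcast : ((e - a : ℕ) : ℝ) * α = (e : ℝ) * α - (a : ℝ) * α := by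
      rw [Nat.cast_sub hae]; ring
    have h1 : Int.fract (((e - a : ℕ) : ℝ) * α) = Int.fract ((e : ℝ) * α) - fa := by
      rw [hcast, fract_sub_fract', ← hfa,
        fract_eval_lo (by linarith) (by linarith [Int.fract_lt_one ((e : ℝ) * α)])]
    have h2 : b ≤ e - a :=
      hb_min _ (by omega) (by rw [h1]; linarith [Int.fract_lt_one ((e : ℝ) * α)])
    omega
  -- the two step sizes overlap the interval: β ≤ (1 - fa) + fb
  have hsum : β ≤ (1 - fa) + fb := by
    by_contra hcon
    push_neg at hcon
    rcases Nat.lt_or_ge a b with h | h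
    · have hcast : ((b - a : ℕ) : ℝ) * α = (b : ℝ) * α - (a : ℝ) * α := by
        rw [Nat.cast_sub h.le]; ring
      have h1 : Int.fract (((b - a : ℕ) : ℝ) * α) = (1 - fa) + fb := by
        rw [hcast, fract_sub_fract', ← hfa, ← hfb,
          fract_eval_neg (by linarith) (by linarith)]
        ring
      have h2 : b ≤ b - a := hb_min _ (by omega) (by rw [h1]; linarith)
      omega
    · have h' : b < a := by omega
      have hcast : ((a - b : ℕ) : ℝ) * α = (a : ℝ) * α - (b : ℝ) * α := by
        rw [Nat.cast_sub h'.le]; ring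
      have h1 : Int.fract (((a - b : ℕ) : ℝ) * α) = fa - fb := by
        rw [hcast, fract_sub_fract', ← hfa, ← hfb,
          fract_eval_lo (by linarith) (by linarith)]
      have h2 : a ≤ a - b := ha_min _ (by omega) (by rw [h1]; linarith)
      omega
  -- classification of admissible steps within one period
  have hclassify : ∀ n e : ℕ, Int.fract ((n : ℝ) * α) < β → 0 < e → e < a + b →
      Int.fract (((n : ℝ) + e) * α) < β →
      (b ≤ e ∧ fb ≤ Int.fract ((e : ℝ) * α) ∧
        Int.fract ((n : ℝ) * α) + Int.fract ((e : ℝ) * α) < β) ∨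
      (a ≤ e ∧ Int.fract ((e : ℝ) * α) ≤ fa ∧
        1 ≤ Int.fract ((n : ℝ) * α) + Int.fract ((e : ℝ) * α)) := by
    intro n e hx he hea hland
    rw [fract_step] at hland
    have hx0 : 0 ≤ Int.fract ((n : ℝ) * α) := Int.fract_nonneg _
    have hf0 : 0 ≤ Int.fract ((e : ℝ) * α) := Int.fract_nonneg _
    have hx1 : Int.fract ((n : ℝ) * α) < 1 := Int.fract_lt_one _
    have hf1 : Int.fract ((e : ℝ) * α) < 1 := Int.fract_lt_one _
    rcases lt_or_ge (Int.fract ((n : ℝ) * α) + Int.fract ((e : ℝ) * α)) 1 with h | h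
    · rw [fract_eval_lo (by linarith) h] at hland
      have hfβ : Int.fract ((e : ℝ) * α) < β := by linarith
      exact Or.inl ⟨hb_min e he hfβ, hL2 e he hea hfβ, hland⟩
    · have hf_hi : 1 - β < Int.fract ((e : ℝ) * α) := by linarith
      exact Or.inr ⟨ha_min e he hf_hi, hL1 e he hea hf_hi, h⟩
  -- gap structure on the three regions
  have hGB : ∀ n : ℕ, Int.fract ((n : ℝ) * α) < β - fb →
      Int.fract (((n : ℝ) + (b : ℕ)) * α) < β ∧
      ∀ m : ℕ, n < m → m < n + b → ¬ Int.fract ((m : ℝ) * α) < β := by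
    intro n hx
    have hx0 : 0 ≤ Int.fract ((n : ℝ) * α) := Int.fract_nonneg _
    have hxβ : Int.fract ((n : ℝ) * α) < β := by linarith
    constructor
    · rw [fract_step, ← hfb, fract_eval_lo (by linarith) (by linarith)]
      linarith
    · intro m hm1 hm2 hcon
      have he0 : 0 < m - n := by omega
      have heb : m - n < b := by omega
      have hcon' : Int.fract (((n : ℝ) + (m - n : ℕ)) * α) < β := by
        rw [show ((n : ℝ) + ((m - n : ℕ) : ℝ)) = (m : ℝ) by
          rw [Nat.cast_sub hm1.le]; ring]
        exact hcon
      rcases hclassify n (m - n) hxβ he0 (by omega) hcon' with ⟨hbe, _, _⟩ | ⟨_, hfe, hge⟩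
      · omega
      · linarith
  have hGA : ∀ n : ℕ, 1 - fa ≤ Int.fract ((n : ℝ) * α) → Int.fract ((n : ℝ) * α) < β →
      Int.fract (((n : ℝ) + (a : ℕ)) * α) < β ∧
      ∀ m : ℕ, n < m → m < n + a → ¬ Int.fract ((m : ℝ) * α) < β := by
    intro n hx1 hx2
    have hx3 : Int.fract ((n : ℝ) * α) < 1 := Int.fract_lt_one _
    constructor
    · rw [fract_step, ← hfa, fract_eval_hi (by linarith) (by linarith)]
      linarith
    · intro m hm1 hm2 hcon
      have he0 : 0 < m - n := by omega
      have hcon' : Int.fract (((n : ℝ) + (m - n : ℕ)) * α) < β := by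
        rw [show ((n : ℝ) + ((m - n : ℕ) : ℝ)) = (m : ℝ) by
          rw [Nat.cast_sub hm1.le]; ring]
        exact hcon
      rcases hclassify n (m - n) hx2 he0 (by omega) hcon' with ⟨_, hfe, hlt⟩ | ⟨hae, _, _⟩
      · linarith
      · omega
  have hGC : ∀ n : ℕ, β - fb ≤ Int.fract ((n : ℝ) * α) → Int.fract ((n : ℝ) * α) < 1 - fa →
      Int.fract (((n : ℝ) + ((a + b : ℕ) : ℝ)) * α) < β ∧
      ∀ m : ℕ, n < m → m < n + (a + b) → ¬ Int.fract ((m : ℝ) * α) < β := by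
    intro n hx1 hx2
    have hx0 : 0 ≤ Int.fract ((n : ℝ) * α) := Int.fract_nonneg _
    have hxβ : Int.fract ((n : ℝ) * α) < β := by linarith
    constructor
    · have e1 : ((n : ℝ) + ((a + b : ℕ) : ℝ)) * α = (((n + a : ℕ) : ℝ) + (b : ℕ)) * α := by
        push_cast; ring
      have hna : Int.fract (((n + a : ℕ) : ℝ) * α) = Int.fract ((n : ℝ) * α) + fa := by
        rw [show (((n + a : ℕ) : ℝ)) * α = ((n : ℝ) + (a : ℕ)) * α by push_cast; ring,
          fract_step, ← hfa, fract_eval_lo (by linarith) (by linarith)]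
      rw [e1, fract_step, hna, ← hfb,
        fract_eval_hi (by linarith) (by linarith)]
      linarith
    · intro m hm1 hm2 hcon
      have he0 : 0 < m - n := by omega
      have hcon' : Int.fract (((n : ℝ) + (m - n : ℕ)) * α) < β := by
        rw [show ((n : ℝ) + ((m - n : ℕ) : ℝ)) = (m : ℝ) by
          rw [Nat.cast_sub hm1.le]; ring]
        exact hcon
      rcases hclassify n (m - n) hxβ he0 (by omega) hcon' with ⟨_, hfe, hlt⟩ | ⟨_, hfe, hge⟩
      · linarith
      · linarith
  -- uniqueness of the gap starting at a given n
  have huniq : ∀ (n d d' : ℕ), 0 < d → 0 < d' →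
      Int.fract (((n : ℝ) + d) * α) < β →
      (∀ m : ℕ, n < m → m < n + d → ¬ Int.fract ((m : ℝ) * α) < β) →
      Int.fract (((n : ℝ) + d') * α) < β →
      (∀ m : ℕ, n < m → m < n + d' → ¬ Int.fract ((m : ℝ) * α) < β) → d = d' := by
    intro n d d' hd hd' hl1 hb1' hl2 hb2'
    by_contra hne
    rcases Nat.lt_or_ge d d' with h | h
    · exact hb2' (n + d) (by omega) (by omega)
        (by rw [show ((n + d : ℕ) : ℝ) = (n : ℝ) + d by push_cast; ring]; exact hl1)
    · have h' : d' < d := by omega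
      exact hb1' (n + d') (by omega) (by omega)
        (by rw [show ((n + d' : ℕ) : ℝ) = (n : ℝ) + d' by push_cast; ring]; exact hl2)
  -- every gap is a, b, or a+b
  have hgap : ∀ d n : ℕ, 0 < d → Int.fract ((n : ℝ) * α) < β →
      Int.fract (((n : ℝ) + d) * α) < β →
      (∀ m : ℕ, n < m → m < n + d → ¬ Int.fract ((m : ℝ) * α) < β) →
      d = b ∨ d = a ∨ (β - fb < 1 - fa ∧ d = a + b) := by
    intro d n hd hx hland hbtw
    rcases lt_or_ge (Int.fract ((n : ℝ) * α)) (β - fb) with hreg | hreg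
    · obtain ⟨hl, hbt⟩ := hGB n hreg
      exact Or.inl (huniq n d b hd hb_pos hland hbtw hl hbt)
    · rcases le_or_gt (1 - fa) (Int.fract ((n : ℝ) * α)) with hreg2 | hreg2
      · obtain ⟨hl, hbt⟩ := hGA n hreg2 hx
        exact Or.inr (Or.inl (huniq n d a hd ha_pos hland hbtw hl hbt))
      · obtain ⟨hl, hbt⟩ := hGC n hreg hreg2
        exact Or.inr (Or.inr ⟨by linarith,
          huniq n d (a + b) hd (by omega) hland hbtw hl hbt⟩)
  -- membership of a and b
  have hmem_b : 0 < b ∧ ∃ n : ℕ, Int.fract ((n : ℝ) * α) < β ∧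
      Int.fract (((n : ℝ) + b) * α) < β ∧
      ∀ m : ℕ, n < m → m < n + b → ¬ Int.fract ((m : ℝ) * α) < β := by
    have h0 : Int.fract (((0 : ℕ) : ℝ) * α) < β - fb := by
      norm_num
      linarith
    obtain ⟨hl, hbt⟩ := hGB 0 h0
    exact ⟨hb_pos, 0, by norm_num; linarith, hl, hbt⟩
  have hmem_a : 0 < a ∧ ∃ n : ℕ, Int.fract ((n : ℝ) * α) < β ∧
      Int.fract (((n : ℝ) + a) * α) < β ∧
      ∀ m : ℕ, n < m → m < n + a → ¬ Int.fract ((m : ℝ) * α) < β := by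
    obtain ⟨n, hn0, hn1, hn2⟩ := exists_orbit_in_Ioo hα
      (show (0 : ℝ) ≤ 1 - fa by linarith) (show 1 - fa < β by linarith) hb1.le
    obtain ⟨hl, hbt⟩ := hGA n hn1.le hn2
    exact ⟨ha_pos, n, by linarith, hl, hbt⟩
  by_cases hC : β - fb < 1 - fa
  · -- three gaps
    refine Or.inr ⟨a, b, hab, ?_⟩
    ext d
    simp only [Set.mem_setOf_eq, Set.mem_insert_iff, Set.mem_singleton_iff]
    constructor
    · rintro ⟨hd, n, hx, hland, hbtw⟩
      rcases hgap d n hd hx hland hbtw with h | h | ⟨_, h⟩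
      · exact Or.inr (Or.inl h)
      · exact Or.inl h
      · exact Or.inr (Or.inr h)
    · rintro (rfl | rfl | rfl)
      · exact hmem_a
      · exact hmem_b
      · obtain ⟨n, hn0, hn1, hn2⟩ := exists_orbit_in_Ioo hα
          (show (0 : ℝ) ≤ β - fb by linarith) hC (by linarith)
        obtain ⟨hl, hbt⟩ := hGC n hn1.le hn2
        exact ⟨by omega, n, by linarith, hl, hbt⟩
  · -- two gaps
    left
    have hset : {d : ℕ | 0 < d ∧ ∃ n : ℕ, Int.fract (n * α) < β ∧
        Int.fract ((n + d) * α) < β ∧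
        ∀ m : ℕ, n < m → m < n + d → ¬ Int.fract (m * α) < β} = {a, b} := by
      ext d
      simp only [Set.mem_setOf_eq, Set.mem_insert_iff, Set.mem_singleton_iff]
      constructor
      · rintro ⟨hd, n, hx, hland, hbtw⟩
        rcases hgap d n hd hx hland hbtw with h | h | ⟨hcc, _⟩
        · exact Or.inr h
        · exact Or.inl h
        · exact absurd hcc hC
      · rintro (rfl | rfl)
        · exact hmem_a
        · exact hmem_b
    rw [hset]
    exact Set.ncard_pair hab
end
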